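/- arXiv:2106.05914 — 5 statements merged into one kernel-verified Lean document; each statement's English description precedes it below -/
import Mathlib

section
/- Let f be a continuous function on [0, ∞) and 0 < p ≤ 1. If f(sqrt(a*b)) ≤ f(((a^p + b^p)/2)^(1/p)) for all non-negative reals a ≤ b, then f is monotone non-decreasing on [0, ∞). -/
theorem monotone_of_sqrt_le_power_mean_ineq (f : ℝ → ℝ) (p : ℝ)
    (hp0 : 0 < p) (hp1 : p ≤ 1) (hf : ContinuousOn f (Set.Ici 0))
    (h : ∀ a b : ℝ, 0 ≤ a → a ≤ b →
      f (Real.sqrt (a * b)) ≤ f (((a ^ p + b ^ p) / 2) ^ (1 / p))) :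
    MonotoneOn f (Set.Ici 0) := by
  have hpne : p ≠ 0 := hp0.ne'
  have hpinv : p * (1 / p) = 1 := by field_simp
  have h2 : ((2:ℝ) ^ (1/p)) ^ p = 2 := by
    rw [← Real.rpow_mul (by norm_num : (0:ℝ) ≤ 2)]
    rw [one_div, inv_mul_cancel₀ hpne, Real.rpow_one]
  intro x hx y hy hxy
  rcases eq_or_lt_of_le hxy with rfl | hlt
  · exact le_rfl
  have hy0 : 0 ≤ y := hy
  rcases eq_or_lt_of_le (show (0:ℝ) ≤ x from hx) with rfl | hx0
  · -- x = 0
    have hb : (0:ℝ) ≤ y * 2 ^ (1/p) := by positivity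
    have := h 0 (y * 2 ^ (1/p)) le_rfl hb
    have e1 : Real.sqrt (0 * (y * 2 ^ (1/p))) = 0 := by simp
    have e2 : (((0:ℝ) ^ p + (y * 2 ^ (1/p)) ^ p) / 2) ^ (1/p) = y := by
      rw [Real.zero_rpow hpne, zero_add, Real.mul_rpow hy0 (by positivity), h2,
        mul_div_assoc, div_self (by norm_num : (2:ℝ) ≠ 0), mul_one,
        ← Real.rpow_mul hy0, hpinv, Real.rpow_one]
    rw [e1, e2] at this
    exact this
  · -- 0 < x
    set T := max x (y * 2 ^ (1/p)) with hT
    have hT1 : x ≤ T := le_max_left _ _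
    have hT2 : y * 2 ^ (1/p) ≤ T := le_max_right _ _
    have hT0 : 0 < T := lt_of_lt_of_le hx0 hT1
    set g : ℝ → ℝ := fun t => (((x^2/t) ^ p + t ^ p) / 2) ^ (1/p) with hg
    have hgcont : ContinuousOn g (Set.Icc x T) := by
      apply ContinuousOn.rpow_const
      · apply ContinuousOn.div_const
        apply ContinuousOn.add
        · apply ContinuousOn.rpow_const
          · exact continuousOn_const.div continuousOn_id
              (fun t ht => (lt_of_lt_of_le hx0 ht.1).ne')
          · exact fun t ht => Or.inr hp0.le
        · exact continuousOn_id.rpow_const (fun t ht => Or.inr hp0.le)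
      · exact fun t ht => Or.inr (by positivity)
    have hgx : g x = x := by
      have : x^2/x = x := by field_simp [sq]
      simp only [hg, this]
      rw [show (x ^ p + x ^ p) / 2 = x ^ p by ring,
        ← Real.rpow_mul hx0.le, hpinv, Real.rpow_one]
    have hgT : y ≤ g T := by
      have h1 : ((y * 2 ^ (1/p)) ^ p / 2) ^ (1/p) = y := by
        rw [Real.mul_rpow hy0 (by positivity), h2,
          mul_div_assoc, div_self (by norm_num : (2:ℝ) ≠ 0), mul_one,
          ← Real.rpow_mul hy0, hpinv, Real.rpow_one]
      calc y = ((y * 2 ^ (1/p)) ^ p / 2) ^ (1/p) := h1.symm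
        _ ≤ (T ^ p / 2) ^ (1/p) := by
            apply Real.rpow_le_rpow (by positivity)
            · apply div_le_div_of_nonneg_right ?_ (by norm_num)
              · exact Real.rpow_le_rpow (by positivity) hT2 hp0.le
            · positivity
        _ ≤ g T := by
            apply Real.rpow_le_rpow (by positivity) ?_ (by positivity)
            apply div_le_div_of_nonneg_right ?_ (by norm_num)
            have : (0:ℝ) ≤ (x^2/T) ^ p := by positivity
            linarith
    have hmem : y ∈ Set.Icc (g x) (g T) := ⟨by rw [hgx]; exact hxy, hgT⟩
    obtain ⟨t, ht, hgt⟩ := intermediate_value_Icc hT1 hgcont hmem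
    have hxt : x ≤ t := ht.1
    have ht0 : 0 < t := lt_of_lt_of_le hx0 hxt
    have ha0 : 0 ≤ x^2/t := by positivity
    have hab : x^2/t ≤ t := by
      rw [div_le_iff₀ ht0, ← sq]
      exact pow_le_pow_left₀ hx0.le hxt 2
    have key := h (x^2/t) t ha0 hab
    have e1 : Real.sqrt (x^2/t * t) = x := by
      rw [div_mul_cancel₀ _ ht0.ne', Real.sqrt_sq hx0.le]
    rw [e1] at key
    exact key.trans_eq (congrArg f hgt)
end

section
/- For real numbers q > 1 and r with 1 < r ≤ min(2, q), and positive definite n×n complex matrices A and B, one has ((A + B)/2)^r ≤ ((A^q + B^q)/2)^(r/q) in the Loewner order. -/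
open scoped ComplexOrder

/-- The real power of a matrix, via the continuous functional calculus. -/
noncomputable def mpow {n : ℕ} (A : Matrix (Fin n) (Fin n) ℂ) (p : ℝ) :
    Matrix (Fin n) (Fin n) ℂ :=
  cfc (fun x : ℝ => x ^ p) A

open MeasureTheory Set Matrix

namespace MeanPowAux




noncomputable def kern (σ t : ℝ) (l : ℝ) : ℝ := l ^ (σ - 1) * (t / (t + l))

lemma kern_nonneg {σ t l : ℝ} (ht : 0 < t) (hl : 0 < l) : 0 ≤ kern σ t l := by
  unfold kern; positivity

lemma continuousOn_kern {σ t : ℝ} (ht : 0 < t) :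
    ContinuousOn (kern σ t) (Ioi (0:ℝ)) := by
  apply ContinuousOn.mul
  · exact ContinuousOn.rpow_const continuousOn_id fun x hx => Or.inl (ne_of_gt hx)
  · exact ContinuousOn.div continuousOn_const
      ((continuous_const.add continuous_id).continuousOn)
      (fun x hx => by have : (0:ℝ) < x := hx; positivity)

lemma integrableOn_kern {σ t : ℝ} (hσ0 : 0 < σ) (hσ1 : σ < 1) (ht : 0 < t) :
    IntegrableOn (kern σ t) (Ioi 0) := by
  have hcont := continuousOn_kern (σ := σ) ht
  have h1 : IntegrableOn (kern σ t) (Ioc 0 1) := by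
    have hg : IntegrableOn (fun l : ℝ => l ^ (σ - 1)) (Ioc 0 1) := by
      rw [← intervalIntegrable_iff_integrableOn_Ioc_of_le (by norm_num)]
      exact intervalIntegral.intervalIntegrable_rpow' (by linarith)
    refine Integrable.mono hg ?_ ?_
    · exact (hcont.mono Ioc_subset_Ioi_self).aestronglyMeasurable measurableSet_Ioc
    · refine ae_restrict_of_forall_mem measurableSet_Ioc fun l hl => ?_
      have hl0 : (0:ℝ) < l := hl.1
      have h2 : t / (t + l) ≤ 1 := by
        rw [div_le_one (by positivity)]; linarith
      have h3 : 0 ≤ t / (t + l) := by positivity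
      rw [Real.norm_eq_abs, Real.norm_eq_abs, abs_of_nonneg (kern_nonneg ht hl0),
        abs_of_nonneg (Real.rpow_nonneg hl0.le _)]
      unfold kern
      nlinarith [Real.rpow_nonneg hl0.le (σ - 1)]
  have h2 : IntegrableOn (kern σ t) (Ioi 1) := by
    have hg : IntegrableOn (fun l : ℝ => t * l ^ (σ - 2)) (Ioi 1) :=
      (integrableOn_Ioi_rpow_of_lt (by linarith) one_pos).const_mul t
    refine Integrable.mono hg ?_ ?_
    · exact (hcont.mono (Ioi_subset_Ioi (by norm_num))).aestronglyMeasurable measurableSet_Ioi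
    · refine ae_restrict_of_forall_mem measurableSet_Ioi fun l hl => ?_
      have hl1 : (1:ℝ) < l := hl
      have hl0 : (0:ℝ) < l := by linarith
      rw [Real.norm_eq_abs, Real.norm_eq_abs, abs_of_nonneg (kern_nonneg ht hl0),
        abs_of_nonneg (show (0:ℝ) ≤ t * l ^ (σ - 2) by positivity)]
      have hb : t / (t + l) ≤ t / l := by
        apply div_le_div_of_nonneg_left ht.le hl0; linarith
      have h4 : kern σ t l ≤ l ^ (σ - 1) * (t / l) := by
        unfold kern
        exact mul_le_mul_of_nonneg_left hb (Real.rpow_nonneg hl0.le _)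
      have key : l ^ (σ - 1) * (t / l) = t * l ^ (σ - 2) := by
        have h5 : l ^ (σ - 2) = l ^ (σ - 1) * l⁻¹ := by
          rw [show σ - 2 = σ - 1 - 1 by ring, Real.rpow_sub hl0, Real.rpow_one, div_eq_mul_inv]
        rw [h5, div_eq_mul_inv]; ring
      linarith
  have : Ioc (0:ℝ) 1 ∪ Ioi 1 = Ioi 0 := Ioc_union_Ioi_eq_Ioi (by norm_num)
  rw [← this]
  exact h1.union h2



variable {σ t : ℝ}

noncomputable def Jc (σ : ℝ) : ℝ := ∫ l in Ioi (0:ℝ), kern σ 1 l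

lemma kern_integral (hσ0 : 0 < σ) (hσ1 : σ < 1) (ht : 0 < t) :
    ∫ l in Ioi (0:ℝ), kern σ t l = t ^ σ * Jc σ := by
  have h := integral_comp_mul_left_Ioi (kern σ t) 0 ht
  rw [mul_zero] at h
  have h2 : EqOn (fun x => kern σ t (t * x)) (fun x => t ^ (σ - 1) * kern σ 1 x) (Ioi (0:ℝ)) := by
    intro x hx
    have hx0 : (0:ℝ) < x := hx
    simp only [kern]
    rw [Real.mul_rpow ht.le hx0.le]
    have hx1 : (1:ℝ) + x ≠ 0 := by positivity
    field_simp
  rw [setIntegral_congr_fun measurableSet_Ioi h2, integral_const_mul] at h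
  rw [smul_eq_mul] at h
  have := h.symm
  -- t⁻¹ * ∫ kern σ t = t^(σ-1) * Jc σ
  have h3 : ∫ l in Ioi (0:ℝ), kern σ t l = t * (t ^ (σ - 1) * Jc σ) := by
    field_simp [Jc] at this ⊢
    simpa [Jc, mul_assoc] using this
  rw [h3, ← mul_assoc, ← Real.rpow_one_add' (by positivity) (by intro hc; linarith : 1 + (σ-1) ≠ 0)]
  norm_num

lemma Jc_pos (hσ0 : 0 < σ) (hσ1 : σ < 1) : 0 < Jc σ := by
  have hint := integrableOn_kern hσ0 hσ1 one_pos
  rw [Jc, setIntegral_pos_iff_support_of_nonneg_ae ?hae hint]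
  case hae =>
    refine ae_restrict_of_forall_mem measurableSet_Ioi fun l hl => ?_
    have hl0 : (0:ℝ) < l := hl
    unfold kern; positivity
  · have hsub : Ioi (0:ℝ) ⊆ Function.support (kern σ 1) := by
      intro l hl
      have hl0 : (0:ℝ) < l := hl
      unfold Function.support kern
      simp only [mem_setOf_eq]
      positivity
    have : volume (Function.support (kern σ 1) ∩ Ioi 0) = volume (Ioi (0:ℝ)) := by
      rw [inter_eq_right.mpr hsub]
    rw [this]
    simp [Real.volume_Ioi]

lemma key_ineq {ι : Type} [Fintype ι] (hσ0 : 0 < σ) (hσ1 : σ < 1)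
    (e t : ι → ℝ) (ht : ∀ k, 0 < t k)
    (h : ∀ l : ℝ, 0 < l → 0 ≤ ∑ k, e k * (t k / (t k + l))) :
    0 ≤ ∑ k, e k * t k ^ σ := by
  have hterm : ∀ k : ι, IntegrableOn (fun l => e k * kern σ (t k) l) (Ioi (0:ℝ)) :=
    fun k => (integrableOn_kern hσ0 hσ1 (ht k)).const_mul _
  have h2 : ∫ l in Ioi (0:ℝ), ∑ k, e k * kern σ (t k) l
      = ∑ k, e k * (t k ^ σ * Jc σ) := by
    rw [integral_finset_sum _ (fun k _ => hterm k)]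
    refine Finset.sum_congr rfl fun k _ => ?_
    rw [integral_const_mul, kern_integral hσ0 hσ1 (ht k)]
  have h3 : 0 ≤ ∫ l in Ioi (0:ℝ), ∑ k, e k * kern σ (t k) l := by
    refine setIntegral_nonneg measurableSet_Ioi fun l hl => ?_
    have hl0 : (0:ℝ) < l := hl
    have : ∑ k, e k * kern σ (t k) l = l ^ (σ - 1) * ∑ k, e k * (t k / (t k + l)) := by
      rw [Finset.mul_sum]
      exact Finset.sum_congr rfl fun k _ => by unfold kern; ring
    rw [this]
    exact mul_nonneg (Real.rpow_nonneg hl0.le _) (h l hl0)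
  rw [h2] at h3
  have hJ := Jc_pos hσ0 hσ1
  have h4 : 0 ≤ (∑ k, e k * t k ^ σ) * Jc σ := by
    rw [Finset.sum_mul]
    refine h3.trans_eq (Finset.sum_congr rfl fun k _ => by ring)
  exact nonneg_of_mul_nonneg_left h4 hJ




variable {n : ℕ} {A B : Matrix (Fin n) (Fin n) ℂ}

lemma ctsOn (f : ℝ → ℝ) (A : Matrix (Fin n) (Fin n) ℂ) :
    ContinuousOn f (spectrum ℝ A) :=
  Set.Finite.continuousOn Matrix.finite_real_spectrum f

lemma spec_pos (hA : A.PosDef) {t : ℝ} (ht : t ∈ spectrum ℝ A) : 0 < t := by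
  rw [hA.isHermitian.spectrum_real_eq_range_eigenvalues] at ht
  obtain ⟨i, rfl⟩ := ht
  exact hA.eigenvalues_pos i

lemma cfc_hermitian (f : ℝ → ℝ) (A : Matrix (Fin n) (Fin n) ℂ) :
    (cfc f A).IsHermitian := by
  have h : IsSelfAdjoint (cfc f A) := cfc_predicate f A
  exact h

/-- quadratic form of `cfc f A` -/
lemma qf (hA : A.IsHermitian) (f : ℝ → ℝ) (x : Fin n → ℂ) :
    star x ⬝ᵥ (cfc f A) *ᵥ x =
      ((∑ i, f (hA.eigenvalues i) *
        Complex.normSq (((star (hA.eigenvectorUnitary : Matrix (Fin n) (Fin n) ℂ)) *ᵥ x) i) : ℝ) : ℂ) := by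
  rw [hA.cfc_eq, Matrix.IsHermitian.cfc, Unitary.conjStarAlgAut_apply]
  set U := (hA.eigenvectorUnitary : Matrix (Fin n) (Fin n) ℂ) with hU
  set y := (star U) *ᵥ x with hy
  have h1 : (U * Matrix.diagonal (RCLike.ofReal ∘ f ∘ hA.eigenvalues) * star U) *ᵥ x
      = U *ᵥ (Matrix.diagonal (RCLike.ofReal ∘ f ∘ hA.eigenvalues) *ᵥ y) := by
    rw [hy, Matrix.mulVec_mulVec, Matrix.mulVec_mulVec]
  rw [h1]
  have h2 : star x ⬝ᵥ (U *ᵥ (Matrix.diagonal (RCLike.ofReal ∘ f ∘ hA.eigenvalues) *ᵥ y))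
      = star y ⬝ᵥ (Matrix.diagonal (RCLike.ofReal ∘ f ∘ hA.eigenvalues) *ᵥ y) := by
    rw [Matrix.dotProduct_mulVec, hy, Matrix.star_mulVec, Matrix.star_eq_conjTranspose,
      Matrix.conjTranspose_conjTranspose]
  rw [h2, dotProduct]
  push_cast
  refine Finset.sum_congr rfl fun i _ => ?_
  rw [Matrix.mulVec_diagonal]
  simp only [Pi.star_apply, Function.comp_apply, RCLike.star_def]
  have hco : (RCLike.ofReal (f (hA.eigenvalues i)) : ℂ) = Complex.ofReal (f (hA.eigenvalues i)) := rfl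
  rw [hco, ← Complex.mul_conj]; ring

lemma psd_cfc (hA : A.IsHermitian) {f : ℝ → ℝ}
    (hf : ∀ t ∈ spectrum ℝ A, 0 ≤ f t) : (cfc f A).PosSemidef := by
  refine Matrix.PosSemidef.of_dotProduct_mulVec_nonneg (cfc_hermitian f A) fun x => ?_
  rw [qf hA f x]
  rw [Complex.zero_le_real]
  refine Finset.sum_nonneg fun i _ => mul_nonneg
    (hf _ (hA.eigenvalues_mem_spectrum_real i)) (Complex.normSq_nonneg _)

lemma posdef_cfc (hA : A.IsHermitian) {f : ℝ → ℝ}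
    (hf : ∀ t ∈ spectrum ℝ A, 0 < f t) : (cfc f A).PosDef := by
  refine Matrix.PosDef.of_dotProduct_mulVec_pos (cfc_hermitian f A) fun x hx => ?_
  rw [qf hA f x]
  rw [Complex.zero_lt_real]
  set U := (hA.eigenvectorUnitary : Matrix (Fin n) (Fin n) ℂ) with hU
  set y := (star U) *ᵥ x with hy
  have hyne : y ≠ 0 := by
    intro h0
    apply hx
    have hUU : U * star U = 1 :=
      Matrix.mem_unitaryGroup_iff.mp (SetLike.coe_mem hA.eigenvectorUnitary)
    have : U *ᵥ y = x := by
      rw [hy, Matrix.mulVec_mulVec, hUU, Matrix.one_mulVec]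
    rw [← this, h0, Matrix.mulVec_zero]
  obtain ⟨i, hi⟩ := Function.ne_iff.mp hyne
  refine Finset.sum_pos' (fun j _ => mul_nonneg
    (hf _ (hA.eigenvalues_mem_spectrum_real j)).le (Complex.normSq_nonneg _))
    ⟨i, Finset.mem_univ i, mul_pos (hf _ (hA.eigenvalues_mem_spectrum_real i))
      (by simpa [Complex.normSq_pos] using hi)⟩


lemma hermitian_rsmul {M : Matrix (Fin n) (Fin n) ℂ} (hM : M.IsHermitian) (c : ℝ) :
    ((c : ℝ) • M).IsHermitian := by
  unfold Matrix.IsHermitian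
  ext i j
  simp [Matrix.conjTranspose_apply, Matrix.smul_apply, ← hM.apply i j]

lemma posdef_rsmul {M : Matrix (Fin n) (Fin n) ℂ} (hM : M.PosDef) {c : ℝ} (hc : 0 < c) :
    ((c : ℝ) • M).PosDef := by
  refine Matrix.PosDef.of_dotProduct_mulVec_pos (hermitian_rsmul hM.1 c) fun x hx => ?_
  rw [Matrix.smul_mulVec, dotProduct_smul]
  have h := hM.dotProduct_mulVec_pos hx
  have hc' : (0:ℂ) < (c : ℂ) := by exact_mod_cast hc
  calc (0:ℂ) < (c:ℂ) * (star x ⬝ᵥ M *ᵥ x) := mul_pos hc' h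
    _ = c • (star x ⬝ᵥ M *ᵥ x) := Complex.real_smul.symm

lemma psd_rsmul {M : Matrix (Fin n) (Fin n) ℂ} (hM : M.PosSemidef) {c : ℝ} (hc : 0 ≤ c) :
    ((c : ℝ) • M).PosSemidef := by
  refine Matrix.PosSemidef.of_dotProduct_mulVec_nonneg (hermitian_rsmul hM.1 c) fun x => ?_
  rw [Matrix.smul_mulVec, dotProduct_smul]
  have h := hM.dotProduct_mulVec_nonneg x
  have hc' : (0:ℂ) ≤ (c : ℂ) := by exact_mod_cast hc
  calc (0:ℂ) ≤ (c:ℂ) * (star x ⬝ᵥ M *ᵥ x) := mul_nonneg hc' h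
    _ = c • (star x ⬝ᵥ M *ᵥ x) := Complex.real_smul.symm

lemma posdef_half_add {A B : Matrix (Fin n) (Fin n) ℂ} (hA : A.PosDef) (hB : B.PosDef) :
    ((2⁻¹ : ℝ) • (A + B)).PosDef :=
  posdef_rsmul (hA.add hB) (by norm_num)

lemma conj_posdef {B R S : Matrix (Fin n) (Fin n) ℂ} (hB : B.PosDef)
    (hRh : R.IsHermitian) (hSR : S * R = 1) : (R * B * R).PosDef := by
  refine Matrix.PosDef.of_dotProduct_mulVec_pos ?_ ?_
  · unfold Matrix.IsHermitian
    rw [Matrix.conjTranspose_mul, Matrix.conjTranspose_mul, hRh.eq, hB.1.eq, mul_assoc]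
  · intro x hx
    have hRx : R *ᵥ x ≠ 0 := by
      intro h0
      apply hx
      have h1 : (S * R) *ᵥ x = S *ᵥ (R *ᵥ x) := (Matrix.mulVec_mulVec _ _ _).symm
      rw [hSR, Matrix.one_mulVec, h0, Matrix.mulVec_zero] at h1
      exact h1
    have key : star x ⬝ᵥ (R * B * R) *ᵥ x = star (R *ᵥ x) ⬝ᵥ B *ᵥ (R *ᵥ x) := by
      rw [Matrix.star_mulVec, hRh.eq, ← Matrix.mulVec_mulVec, ← Matrix.mulVec_mulVec,
        Matrix.dotProduct_mulVec (star x) R]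
    rw [key]
    exact hB.dotProduct_mulVec_pos hRx

set_option maxHeartbeats 2000000 in
lemma al1 {A B : Matrix (Fin n) (Fin n) ℂ} (hA : A.PosDef) (hB : B.PosDef) :
    ((2⁻¹ : ℝ) • (cfc (fun t : ℝ => t⁻¹) A + cfc (fun t : ℝ => t⁻¹) B)
      - cfc (fun t : ℝ => t⁻¹) ((2⁻¹ : ℝ) • (A + B))).PosSemidef := by
  have hAh : A.IsHermitian := hA.1
  have hAsa : IsSelfAdjoint A := hAh
  set S := cfc (fun t : ℝ => Real.sqrt t) A with hSdef
  set R := cfc (fun t : ℝ => (Real.sqrt t)⁻¹) A with hRdef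
  have hSh : S.IsHermitian := cfc_hermitian _ _
  have hRh : R.IsHermitian := cfc_hermitian _ _
  have sqrt_ne : ∀ t ∈ spectrum ℝ A, Real.sqrt t ≠ 0 :=
    fun t ht => (Real.sqrt_pos.mpr (spec_pos hA ht)).ne'
  have hSR : S * R = 1 := by
    rw [hSdef, hRdef, ← cfc_mul _ _ A (ctsOn _ _) (ctsOn _ _),
      cfc_congr (g := fun _ : ℝ => (1:ℝ)) (fun t ht => mul_inv_cancel₀ (sqrt_ne t ht)),
      cfc_const (1:ℝ) A hAsa, _root_.map_one]
  have hRS : R * S = 1 := by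
    rw [hSdef, hRdef, ← cfc_mul _ _ A (ctsOn _ _) (ctsOn _ _),
      cfc_congr (g := fun _ : ℝ => (1:ℝ)) (fun t ht => inv_mul_cancel₀ (sqrt_ne t ht)),
      cfc_const (1:ℝ) A hAsa, _root_.map_one]
  have hSS : S * S = A := by
    rw [hSdef, ← cfc_mul _ _ A (ctsOn _ _) (ctsOn _ _),
      cfc_congr (g := fun t : ℝ => t) (fun t ht => Real.mul_self_sqrt (spec_pos hA ht).le),
      cfc_id' ℝ A]
  have hRR : R * R = cfc (fun t : ℝ => t⁻¹) A := by
    rw [hRdef, ← cfc_mul _ _ A (ctsOn _ _) (ctsOn _ _)]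
    refine cfc_congr fun t ht => ?_
    rw [← mul_inv, Real.mul_self_sqrt (spec_pos hA ht).le]
  set X := R * B * R with hXdef
  have hX : X.PosDef := conj_posdef hB hRh hSR
  have hXh : X.IsHermitian := hX.1
  have hXsa : IsSelfAdjoint X := hXh
  have hBX : B = S * X * S := by
    rw [hXdef, show S * (R * B * R) * S = (S * R) * B * (R * S) by
      simp only [mul_assoc], hSR, hRS, one_mul, mul_one]
  set w : ℝ → ℝ := fun t => (1 + t) / 2 with hwdef
  set W := cfc w X with hWdef
  have wne : ∀ t ∈ spectrum ℝ X, w t ≠ 0 := by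
    intro t ht
    have := spec_pos hX ht
    rw [hwdef]
    positivity
  have hW1 : W = (2⁻¹ : ℝ) • ((1 : Matrix (Fin n) (Fin n) ℂ) + X) := by
    rw [hWdef, hwdef]
    have heq : (fun t : ℝ => (1 + t) / 2) = fun t : ℝ => (2⁻¹ : ℝ) • ((fun s : ℝ => 1 + s) t) := by
      ext t; simp only [smul_eq_mul]; ring
    rw [heq, cfc_smul (2⁻¹ : ℝ) _ X (ctsOn _ _),
      cfc_const_add 1 (fun s : ℝ => s) X (ctsOn _ _) hXsa, cfc_id' ℝ X, _root_.map_one]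
  set K := cfc (fun t : ℝ => (w t)⁻¹) X with hKdef
  have hWK : W * K = 1 := by
    rw [hWdef, hKdef, ← cfc_mul _ _ X (ctsOn _ _) (ctsOn _ _),
      cfc_congr (g := fun _ : ℝ => (1:ℝ)) (fun t ht => mul_inv_cancel₀ (wne t ht)),
      cfc_const (1:ℝ) X hXsa, _root_.map_one]
  set N := (2⁻¹ : ℝ) • (A + B) with hNdef
  have hN : N.PosDef := posdef_half_add hA hB
  have hNsa : IsSelfAdjoint N := hN.1
  have hNSWS : N = S * W * S := by
    rw [hW1, hNdef, hBX, ← hSS]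
    simp only [smul_mul_assoc, mul_smul_comm, mul_add, add_mul, one_mul, mul_one, mul_assoc]
  have hNinv : N * cfc (fun t : ℝ => t⁻¹) N = 1 := by
    nth_rewrite 1 [← cfc_id' ℝ N]
    rw [← cfc_mul _ _ N (ctsOn _ _) (ctsOn _ _),
      cfc_congr (g := fun _ : ℝ => (1:ℝ)) (fun t ht => mul_inv_cancel₀ (spec_pos hN ht).ne'),
      cfc_const (1:ℝ) N hNsa, _root_.map_one]
  have hBsa : IsSelfAdjoint B := hB.1
  have hBinv : B * cfc (fun t : ℝ => t⁻¹) B = 1 := by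
    nth_rewrite 1 [← cfc_id' ℝ B hBsa]
    rw [← cfc_mul _ _ B (ctsOn _ _) (ctsOn _ _),
      cfc_congr (g := fun _ : ℝ => (1:ℝ)) (fun t ht => mul_inv_cancel₀ (spec_pos hB ht).ne'),
      cfc_const (1:ℝ) B hBsa, _root_.map_one]
  have hXinv : cfc (fun t : ℝ => t⁻¹) X * X = 1 := by
    nth_rewrite 2 [← cfc_id' ℝ X]
    rw [← cfc_mul _ _ X (ctsOn _ _) (ctsOn _ _),
      cfc_congr (g := fun _ : ℝ => (1:ℝ)) (fun t ht => inv_mul_cancel₀ (spec_pos hX ht).ne'),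
      cfc_const (1:ℝ) X hXsa, _root_.map_one]
  -- transport the inverses through conjugation by R
  have hiB : cfc (fun t : ℝ => t⁻¹) B = R * cfc (fun t : ℝ => t⁻¹) X * R := by
    refine (left_inv_eq_right_inv ?_ hBinv).symm
    rw [hBX, show (R * cfc (fun t : ℝ => t⁻¹) X * R) * (S * X * S)
        = R * cfc (fun t : ℝ => t⁻¹) X * ((R * S) * (X * S)) by simp only [mul_assoc],
      hRS, one_mul, show R * cfc (fun t : ℝ => t⁻¹) X * (X * S)
        = R * ((cfc (fun t : ℝ => t⁻¹) X * X) * S) by simp only [mul_assoc],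
      hXinv, one_mul, hRS]
  have hKW : K * W = 1 := by
    rw [hWdef, hKdef, ← cfc_mul _ _ X (ctsOn _ _) (ctsOn _ _),
      cfc_congr (g := fun _ : ℝ => (1:ℝ)) (fun t ht => inv_mul_cancel₀ (wne t ht)),
      cfc_const (1:ℝ) X hXsa, _root_.map_one]
  have hiN : cfc (fun t : ℝ => t⁻¹) N = R * K * R := by
    refine (left_inv_eq_right_inv ?_ hNinv).symm
    rw [hNSWS, show (R * K * R) * (S * W * S) = R * K * ((R * S) * (W * S)) by
        simp only [mul_assoc], hRS, one_mul,
      show R * K * (W * S) = R * ((K * W) * S) by simp only [mul_assoc], hKW, one_mul, hRS]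
  have hiA : cfc (fun t : ℝ => t⁻¹) A = R * 1 * R := by
    rw [mul_one, hRR]
  -- scalar inequality
  set h : ℝ → ℝ := fun t => 2⁻¹ * (1 + t⁻¹) - (w t)⁻¹ with hhdef
  have hEpsd : (cfc h X).PosSemidef := by
    refine psd_cfc hXh fun t ht => ?_
    have ht0 : 0 < t := spec_pos hX ht
    have key : h t = (t - 1) ^ 2 / (2 * t * (1 + t)) := by
      rw [hhdef, hwdef]
      field_simp
      ring
    rw [key]
    positivity
  have hcfch : cfc h X = (2⁻¹ : ℝ) • ((1 : Matrix (Fin n) (Fin n) ℂ)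
      + cfc (fun t : ℝ => t⁻¹) X) - K := by
    have e1 : cfc (fun t : ℝ => 1 + t⁻¹) X = 1 + cfc (fun t : ℝ => t⁻¹) X := by
      rw [cfc_const_add 1 (fun t : ℝ => t⁻¹) X (ctsOn _ _) hXsa, _root_.map_one]
    have e2 : cfc (fun t : ℝ => 2⁻¹ * (1 + t⁻¹)) X
        = (2⁻¹ : ℝ) • ((1 : Matrix (Fin n) (Fin n) ℂ) + cfc (fun t : ℝ => t⁻¹) X) := by
      have heq : (fun t : ℝ => 2⁻¹ * (1 + t⁻¹))
          = fun t : ℝ => (2⁻¹ : ℝ) • ((fun s : ℝ => 1 + s⁻¹) t) := by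
        ext t; simp [smul_eq_mul]
      rw [heq, cfc_smul (2⁻¹ : ℝ) _ X (ctsOn _ _), e1]
    rw [hhdef, cfc_sub (fun t : ℝ => 2⁻¹ * (1 + t⁻¹)) (fun t : ℝ => (w t)⁻¹) X
      (ctsOn _ _) (ctsOn _ _), e2, hKdef]
  -- final assembly
  have final : (2⁻¹ : ℝ) • (cfc (fun t : ℝ => t⁻¹) A + cfc (fun t : ℝ => t⁻¹) B)
      - cfc (fun t : ℝ => t⁻¹) N = R * cfc h X * R := by
    rw [hiA, hiB, hiN, hcfch]
    simp only [mul_sub, sub_mul, mul_add, add_mul, smul_add, mul_smul_comm, smul_mul_assoc,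
      mul_one, one_mul, mul_assoc]
  rw [final]
  have := hEpsd.mul_mul_conjTranspose_same R
  rwa [hRh.eq] at this

lemma alshift {A B : Matrix (Fin n) (Fin n) ℂ} (hA : A.PosDef) (hB : B.PosDef)
    {l : ℝ} (hl : 0 < l) :
    ((2⁻¹ : ℝ) • (cfc (fun t : ℝ => (t + l)⁻¹) A + cfc (fun t : ℝ => (t + l)⁻¹) B)
      - cfc (fun t : ℝ => (t + l)⁻¹) ((2⁻¹ : ℝ) • (A + B))).PosSemidef := by
  have shift_posdef : ∀ (C : Matrix (Fin n) (Fin n) ℂ), C.PosDef →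
      (C + (l : ℝ) • (1 : Matrix (Fin n) (Fin n) ℂ)).PosDef := by
    intro C hC
    exact hC.add_posSemidef (psd_rsmul Matrix.PosSemidef.one hl.le)
  have shift_cfc : ∀ (C : Matrix (Fin n) (Fin n) ℂ), C.PosDef →
      cfc (fun t : ℝ => (t + l)⁻¹) C
        = cfc (fun t : ℝ => t⁻¹) (C + (l : ℝ) • (1 : Matrix (Fin n) (Fin n) ℂ)) := by
    intro C hC
    have hCsa : IsSelfAdjoint C := hC.1
    have h1 : cfc (fun t : ℝ => t + l) C = C + (l : ℝ) • (1 : Matrix (Fin n) (Fin n) ℂ) := by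
      rw [cfc_add_const l (fun t : ℝ => t) C (ctsOn _ _) hCsa, cfc_id' ℝ C,
        Algebra.algebraMap_eq_smul_one]
    rw [← h1, ← cfc_comp' (fun t : ℝ => t⁻¹) (fun t : ℝ => t + l) C
      ((Matrix.finite_real_spectrum.image _).continuousOn _) (ctsOn _ _)]
  have key := al1 (shift_posdef A hA) (shift_posdef B hB)
  rw [shift_cfc A hA, shift_cfc B hB, shift_cfc _ (posdef_half_add hA hB)]
  have harr : (2⁻¹ : ℝ) • (A + B) + (l : ℝ) • (1 : Matrix (Fin n) (Fin n) ℂ)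
      = (2⁻¹ : ℝ) • ((A + (l : ℝ) • 1) + (B + (l : ℝ) • 1)) := by
    module
  rw [harr]
  exact key

set_option maxHeartbeats 1000000 in
lemma main_concave {C D : Matrix (Fin n) (Fin n) ℂ} (hC : C.PosDef) (hD : D.PosDef)
    {s : ℝ} (hs0 : 0 < s) (hs1 : s < 1) :
    (cfc (fun t : ℝ => t ^ s) ((2⁻¹ : ℝ) • (C + D))
      - (2⁻¹ : ℝ) • (cfc (fun t : ℝ => t ^ s) C + cfc (fun t : ℝ => t ^ s) D)).PosSemidef := by
  set M := (2⁻¹ : ℝ) • (C + D) with hMdef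
  have hM : M.PosDef := posdef_half_add hC hD
  refine Matrix.PosSemidef.of_dotProduct_mulVec_nonneg (((cfc_hermitian _ M)).sub
    (hermitian_rsmul ((cfc_hermitian _ C).add (cfc_hermitian _ D)) _)) fun x => ?_
  -- set up spectral data
  set dM : Fin n → ℝ := hM.1.eigenvalues with hdM
  set dC : Fin n → ℝ := hC.1.eigenvalues with hdC
  set dD : Fin n → ℝ := hD.1.eigenvalues with hdD
  set wM : Fin n → ℝ := fun i =>
    Complex.normSq (((star (hM.1.eigenvectorUnitary : Matrix (Fin n) (Fin n) ℂ)) *ᵥ x) i) with hwM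
  set wC : Fin n → ℝ := fun i =>
    Complex.normSq (((star (hC.1.eigenvectorUnitary : Matrix (Fin n) (Fin n) ℂ)) *ᵥ x) i) with hwC
  set wD : Fin n → ℝ := fun i =>
    Complex.normSq (((star (hD.1.eigenvectorUnitary : Matrix (Fin n) (Fin n) ℂ)) *ᵥ x) i) with hwD
  have qM : ∀ f : ℝ → ℝ, star x ⬝ᵥ (cfc f M) *ᵥ x = ((∑ i, f (dM i) * wM i : ℝ) : ℂ) :=
    fun f => qf hM.1 f x
  have qC : ∀ f : ℝ → ℝ, star x ⬝ᵥ (cfc f C) *ᵥ x = ((∑ i, f (dC i) * wC i : ℝ) : ℂ) :=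
    fun f => qf hC.1 f x
  have qD : ∀ f : ℝ → ℝ, star x ⬝ᵥ (cfc f D) *ᵥ x = ((∑ i, f (dD i) * wD i : ℝ) : ℂ) :=
    fun f => qf hD.1 f x
  -- expand the quadratic form
  have expand : ∀ f : ℝ → ℝ, star x ⬝ᵥ (cfc f M - (2⁻¹ : ℝ) • (cfc f C + cfc f D)) *ᵥ x
      = (((∑ i, f (dM i) * wM i) - 2⁻¹ * ((∑ i, f (dC i) * wC i)
          + (∑ i, f (dD i) * wD i)) : ℝ) : ℂ) := by
    intro f
    rw [Matrix.sub_mulVec, dotProduct_sub, Matrix.smul_mulVec,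
      dotProduct_smul, Matrix.add_mulVec, dotProduct_add, qM, qC, qD]
    push_cast [Complex.real_smul]
    ring
  rw [expand, Complex.zero_le_real]
  -- mass equalities
  have mass : ∀ (N : Matrix (Fin n) (Fin n) ℂ) (hN : N.PosDef)
      (d : Fin n → ℝ) (w : Fin n → ℝ)
      (hq : star x ⬝ᵥ (cfc (fun _ : ℝ => (1:ℝ)) N) *ᵥ x = ((∑ i, 1 * w i : ℝ) : ℂ)),
      ((∑ i, 1 * w i : ℝ) : ℂ) = star x ⬝ᵥ x := by
    intro N hN d w hq
    have hNsa : IsSelfAdjoint N := hN.1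
    rw [← hq, cfc_const (1:ℝ) N hNsa, _root_.map_one, Matrix.one_mulVec]
  have massM := mass M hM dM wM (qM (fun _ => 1))
  have massC := mass C hC dC wC (qC (fun _ => 1))
  have massD := mass D hD dD wD (qD (fun _ => 1))
  have hmCM : (∑ i, 1 * wC i) = (∑ i, 1 * wM i) :=
    Complex.ofReal_inj.mp (massC.trans massM.symm)
  have hmDM : (∑ i, 1 * wD i) = (∑ i, 1 * wM i) :=
    Complex.ofReal_inj.mp (massD.trans massM.symm)
  -- the combined family
  set ι := (Fin n) ⊕ ((Fin n) ⊕ (Fin n)) with hι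
  set e : ι → ℝ := Sum.elim (fun i => wM i)
    (Sum.elim (fun i => -(2⁻¹ * wC i)) (fun i => -(2⁻¹ * wD i))) with he
  set tt : ι → ℝ := Sum.elim dM (Sum.elim dC dD) with htt
  have httpos : ∀ k, 0 < tt k := by
    rintro (i | i | i)
    · exact hM.eigenvalues_pos i
    · exact hC.eigenvalues_pos i
    · exact hD.eigenvalues_pos i
  have hsum : ∀ g : ℝ → ℝ, ∑ k, e k * g (tt k)
      = (∑ i, g (dM i) * wM i) - 2⁻¹ * ((∑ i, g (dC i) * wC i) + (∑ i, g (dD i) * wD i)) := by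
    intro g
    rw [Fintype.sum_sum_type, Fintype.sum_sum_type]
    have e1 : ∑ i, e (Sum.inl i) * g (tt (Sum.inl i)) = ∑ i, g (dM i) * wM i :=
      Finset.sum_congr rfl fun i _ => by
        simp only [he, htt, Sum.elim_inl]; ring
    have e2 : ∑ i, e (Sum.inr (Sum.inl i)) * g (tt (Sum.inr (Sum.inl i)))
        = ∑ i, -(2⁻¹ * (g (dC i) * wC i)) :=
      Finset.sum_congr rfl fun i _ => by
        simp only [he, htt, Sum.elim_inl, Sum.elim_inr]; ring
    have e3 : ∑ i, e (Sum.inr (Sum.inr i)) * g (tt (Sum.inr (Sum.inr i)))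
        = ∑ i, -(2⁻¹ * (g (dD i) * wD i)) :=
      Finset.sum_congr rfl fun i _ => by
        simp only [he, htt, Sum.elim_inl, Sum.elim_inr]; ring
    rw [e1, e2, e3, Finset.sum_neg_distrib, Finset.sum_neg_distrib,
      ← Finset.mul_sum, ← Finset.mul_sum]
    ring
  -- pointwise hypothesis from alshift
  have hcond : ∀ l : ℝ, 0 < l → 0 ≤ ∑ k, e k * (tt k / (tt k + l)) := by
    intro l hl
    have hpsd := alshift hC hD hl
    have hquad := hpsd.dotProduct_mulVec_nonneg x
    have expand2 : star x ⬝ᵥ ((2⁻¹ : ℝ) • (cfc (fun t : ℝ => (t + l)⁻¹) C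
          + cfc (fun t : ℝ => (t + l)⁻¹) D) - cfc (fun t : ℝ => (t + l)⁻¹) M) *ᵥ x
        = ((2⁻¹ * ((∑ i, (dC i + l)⁻¹ * wC i) + (∑ i, (dD i + l)⁻¹ * wD i))
            - (∑ i, (dM i + l)⁻¹ * wM i) : ℝ) : ℂ) := by
      rw [Matrix.sub_mulVec, dotProduct_sub, Matrix.smul_mulVec,
        dotProduct_smul, Matrix.add_mulVec, dotProduct_add,
        qM (fun t => (t + l)⁻¹), qC (fun t => (t + l)⁻¹), qD (fun t => (t + l)⁻¹)]
      push_cast [Complex.real_smul]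
      ring
    rw [expand2, Complex.zero_le_real] at hquad
    -- decompose t/(t+l) = 1 - l * (t+l)⁻¹
    have hdecomp : ∑ k, e k * (tt k / (tt k + l))
        = ∑ k, e k * 1 - l * ∑ k, e k * (tt k + l)⁻¹ := by
      rw [Finset.mul_sum, ← Finset.sum_sub_distrib]
      refine Finset.sum_congr rfl fun k _ => ?_
      have h0 : 0 < tt k + l := by have := httpos k; linarith
      field_simp
      ring
    rw [hdecomp, hsum (fun _ => 1), hsum (fun t => (t + l)⁻¹), hmCM, hmDM]
    have hz : (∑ i, 1 * wM i) - 2⁻¹ * ((∑ i, 1 * wM i) + (∑ i, 1 * wM i)) = 0 := by ring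
    rw [hz]
    have := mul_nonneg hl.le hquad
    nlinarith [this]
  have := key_ineq hs0 hs1 e tt httpos hcond
  rw [hsum (fun t => t ^ s)] at this
  exact this

set_option maxHeartbeats 1000000 in
lemma main_convex {A B : Matrix (Fin n) (Fin n) ℂ} (hA : A.PosDef) (hB : B.PosDef)
    {r : ℝ} (hr1 : 1 < r) (hr2 : r < 2) :
    ((2⁻¹ : ℝ) • (cfc (fun t : ℝ => t ^ r) A + cfc (fun t : ℝ => t ^ r) B)
      - cfc (fun t : ℝ => t ^ r) ((2⁻¹ : ℝ) • (A + B))).PosSemidef := by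
  set M := (2⁻¹ : ℝ) • (A + B) with hMdef
  have hM : M.PosDef := posdef_half_add hA hB
  refine Matrix.PosSemidef.of_dotProduct_mulVec_nonneg ((hermitian_rsmul ((cfc_hermitian _ A).add (cfc_hermitian _ B)) _).sub
    (cfc_hermitian _ M)) fun x => ?_
  set dM : Fin n → ℝ := hM.1.eigenvalues with hdM
  set dA : Fin n → ℝ := hA.1.eigenvalues with hdA
  set dB : Fin n → ℝ := hB.1.eigenvalues with hdB
  set wM : Fin n → ℝ := fun i =>
    Complex.normSq (((star (hM.1.eigenvectorUnitary : Matrix (Fin n) (Fin n) ℂ)) *ᵥ x) i) with hwM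
  set wA : Fin n → ℝ := fun i =>
    Complex.normSq (((star (hA.1.eigenvectorUnitary : Matrix (Fin n) (Fin n) ℂ)) *ᵥ x) i) with hwA
  set wB : Fin n → ℝ := fun i =>
    Complex.normSq (((star (hB.1.eigenvectorUnitary : Matrix (Fin n) (Fin n) ℂ)) *ᵥ x) i) with hwB
  have qM : ∀ f : ℝ → ℝ, star x ⬝ᵥ (cfc f M) *ᵥ x = ((∑ i, f (dM i) * wM i : ℝ) : ℂ) :=
    fun f => qf hM.1 f x
  have qA : ∀ f : ℝ → ℝ, star x ⬝ᵥ (cfc f A) *ᵥ x = ((∑ i, f (dA i) * wA i : ℝ) : ℂ) :=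
    fun f => qf hA.1 f x
  have qB : ∀ f : ℝ → ℝ, star x ⬝ᵥ (cfc f B) *ᵥ x = ((∑ i, f (dB i) * wB i : ℝ) : ℂ) :=
    fun f => qf hB.1 f x
  have expand : ∀ f : ℝ → ℝ, star x ⬝ᵥ ((2⁻¹ : ℝ) • (cfc f A + cfc f B) - cfc f M) *ᵥ x
      = ((2⁻¹ * ((∑ i, f (dA i) * wA i) + (∑ i, f (dB i) * wB i))
          - (∑ i, f (dM i) * wM i) : ℝ) : ℂ) := by
    intro f
    rw [Matrix.sub_mulVec, dotProduct_sub, Matrix.smul_mulVec,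
      dotProduct_smul, Matrix.add_mulVec, dotProduct_add, qM, qA, qB]
    push_cast [Complex.real_smul]
    ring
  rw [expand, Complex.zero_le_real]
  -- masses
  have mass : ∀ (N : Matrix (Fin n) (Fin n) ℂ) (hN : N.PosDef) (w : Fin n → ℝ)
      (hq : star x ⬝ᵥ (cfc (fun _ : ℝ => (1:ℝ)) N) *ᵥ x = ((∑ i, 1 * w i : ℝ) : ℂ)),
      ((∑ i, 1 * w i : ℝ) : ℂ) = star x ⬝ᵥ x := by
    intro N hN w hq
    have hNsa : IsSelfAdjoint N := hN.1
    rw [← hq, cfc_const (1:ℝ) N hNsa, _root_.map_one, Matrix.one_mulVec]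
  have hmAM : (∑ i, 1 * wA i) = (∑ i, 1 * wM i) :=
    Complex.ofReal_inj.mp ((mass A hA wA (qA (fun _ => 1))).trans
      (mass M hM wM (qM (fun _ => 1))).symm)
  have hmBM : (∑ i, 1 * wB i) = (∑ i, 1 * wM i) :=
    Complex.ofReal_inj.mp ((mass B hB wB (qB (fun _ => 1))).trans
      (mass M hM wM (qM (fun _ => 1))).symm)
  -- identity sums (f = id)
  have idsum : 2⁻¹ * ((∑ i, dA i * wA i) + (∑ i, dB i * wB i)) - (∑ i, dM i * wM i) = 0 := by
    have hAsa : IsSelfAdjoint A := hA.1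
    have hBsa : IsSelfAdjoint B := hB.1
    have hMsa : IsSelfAdjoint M := hM.1
    have h := expand (fun t => t)
    rw [cfc_id' ℝ A hAsa, cfc_id' ℝ B hBsa, cfc_id' ℝ M hMsa, ← hMdef, sub_self,
      Matrix.zero_mulVec, dotProduct_zero] at h
    exact_mod_cast h.symm
  -- combined family
  set e : (Fin n) ⊕ ((Fin n) ⊕ (Fin n)) → ℝ := Sum.elim (fun i => -(wM i))
    (Sum.elim (fun i => 2⁻¹ * wA i) (fun i => 2⁻¹ * wB i)) with he
  set tt : (Fin n) ⊕ ((Fin n) ⊕ (Fin n)) → ℝ := Sum.elim dM (Sum.elim dA dB) with htt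
  have httpos : ∀ k, 0 < tt k := by
    rintro (i | i | i)
    · exact hM.eigenvalues_pos i
    · exact hA.eigenvalues_pos i
    · exact hB.eigenvalues_pos i
  have hsum : ∀ g : ℝ → ℝ, ∑ k, e k * g (tt k)
      = 2⁻¹ * ((∑ i, g (dA i) * wA i) + (∑ i, g (dB i) * wB i))
        - (∑ i, g (dM i) * wM i) := by
    intro g
    rw [Fintype.sum_sum_type, Fintype.sum_sum_type]
    have e1 : ∑ i, e (Sum.inl i) * g (tt (Sum.inl i)) = ∑ i, -(g (dM i) * wM i) :=
      Finset.sum_congr rfl fun i _ => by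
        simp only [he, htt, Sum.elim_inl]; ring
    have e2 : ∑ i, e (Sum.inr (Sum.inl i)) * g (tt (Sum.inr (Sum.inl i)))
        = ∑ i, 2⁻¹ * (g (dA i) * wA i) :=
      Finset.sum_congr rfl fun i _ => by
        simp only [he, htt, Sum.elim_inl, Sum.elim_inr]; ring
    have e3 : ∑ i, e (Sum.inr (Sum.inr i)) * g (tt (Sum.inr (Sum.inr i)))
        = ∑ i, 2⁻¹ * (g (dB i) * wB i) :=
      Finset.sum_congr rfl fun i _ => by
        simp only [he, htt, Sum.elim_inl, Sum.elim_inr]; ring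
    rw [e1, e2, e3, Finset.sum_neg_distrib, ← Finset.mul_sum, ← Finset.mul_sum]
    ring
  -- modified coefficients
  set e' : (Fin n) ⊕ ((Fin n) ⊕ (Fin n)) → ℝ := fun k => e k * tt k with he'
  have hcond : ∀ l : ℝ, 0 < l → 0 ≤ ∑ k, e' k * (tt k / (tt k + l)) := by
    intro l hl
    have hpsd := alshift hA hB hl
    have hquad := hpsd.dotProduct_mulVec_nonneg x
    have expand2 := expand (fun t => (t + l)⁻¹)
    rw [expand2, Complex.zero_le_real] at hquad
    have hdecomp : ∑ k, e' k * (tt k / (tt k + l))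
        = (∑ k, e k * tt k) - l * (∑ k, e k * 1) + l ^ 2 * ∑ k, e k * (tt k + l)⁻¹ := by
      rw [Finset.mul_sum, Finset.mul_sum, ← Finset.sum_sub_distrib, ← Finset.sum_add_distrib]
      refine Finset.sum_congr rfl fun k _ => ?_
      have h0 : 0 < tt k + l := by have := httpos k; linarith
      rw [he']
      field_simp
      ring
    rw [hdecomp, hsum (fun t => t), hsum (fun _ => 1), hsum (fun t => (t + l)⁻¹),
      hmAM, hmBM, idsum]
    have hz : 2⁻¹ * ((∑ i, 1 * wM i) + (∑ i, 1 * wM i)) - (∑ i, 1 * wM i) = 0 := by ring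
    rw [hz]
    nlinarith [sq_nonneg l, mul_nonneg (mul_nonneg hl.le hl.le) hquad]
  have hσ0 : (0:ℝ) < r - 1 := by linarith
  have hσ1 : r - 1 < 1 := by linarith
  have key := key_ineq hσ0 hσ1 e' tt httpos hcond
  have hfinal : ∑ k, e' k * tt k ^ (r - 1) = ∑ k, e k * tt k ^ r := by
    refine Finset.sum_congr rfl fun k _ => ?_
    rw [he']
    have h0 := httpos k
    rw [show tt k ^ r = tt k * tt k ^ (r - 1) by
      rw [← Real.rpow_one_add' h0.le (by intro hc; nlinarith : 1 + (r - 1) ≠ 0)]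
      norm_num]
    ring
  rw [hfinal, hsum (fun t => t ^ r)] at key
  exact key

lemma main_convex2 {A B : Matrix (Fin n) (Fin n) ℂ} (hA : A.PosDef) (hB : B.PosDef) :
    ((2⁻¹ : ℝ) • (cfc (fun t : ℝ => t ^ (2:ℝ)) A + cfc (fun t : ℝ => t ^ (2:ℝ)) B)
      - cfc (fun t : ℝ => t ^ (2:ℝ)) ((2⁻¹ : ℝ) • (A + B))).PosSemidef := by
  have sq_cfc : ∀ (N : Matrix (Fin n) (Fin n) ℂ), N.PosDef →
      cfc (fun t : ℝ => t ^ (2:ℝ)) N = N * N := by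
    intro N hN
    have hNsa : IsSelfAdjoint N := hN.1
    rw [cfc_congr (g := fun t : ℝ => t * t) (fun t _ => by
        rw [show ((2:ℝ)) = ((2:ℕ):ℝ) by norm_num, Real.rpow_natCast]; ring),
      cfc_mul (fun t : ℝ => t) (fun t : ℝ => t) N (ctsOn _ _) (ctsOn _ _), cfc_id' ℝ N hNsa]
  rw [sq_cfc A hA, sq_cfc B hB, sq_cfc _ (posdef_half_add hA hB)]
  have hid : (2⁻¹ : ℝ) • (A * A + B * B)
      - ((2⁻¹ : ℝ) • (A + B)) * ((2⁻¹ : ℝ) • (A + B))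
      = (4⁻¹ : ℝ) • ((A - B) * (A - B)) := by
    simp only [mul_add, add_mul, mul_sub, sub_mul, smul_mul_assoc, mul_smul_comm, smul_smul]
    norm_num
    module
  rw [hid]
  have hherm : (A - B).IsHermitian := hA.1.sub hB.1
  have hpsd : ((A - B) * (A - B)).PosSemidef := by
    have := Matrix.posSemidef_conjTranspose_mul_self (A - B)
    rwa [hherm.eq] at this
  exact psd_rsmul hpsd (by norm_num)

lemma csmul (X : Matrix (Fin n) (Fin n) ℂ) : (2 : ℂ)⁻¹ • X = (2⁻¹ : ℝ) • X := by
  ext i j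
  simp only [Matrix.smul_apply, Complex.real_smul, Complex.ofReal_inv, Complex.ofReal_ofNat, smul_eq_mul]

lemma comp_pow {N : Matrix (Fin n) (Fin n) ℂ} (hN : N.PosDef) {q s : ℝ} (hq : q ≠ 0) :
    cfc (fun t : ℝ => t ^ s) (cfc (fun t : ℝ => t ^ q) N)
      = cfc (fun t : ℝ => t ^ (q * s)) N := by
  have hNsa : IsSelfAdjoint N := hN.1
  rw [← cfc_comp' (fun t : ℝ => t ^ s) (fun t : ℝ => t ^ q) N
    ((Matrix.finite_real_spectrum.image _).continuousOn _) (ctsOn _ _) hNsa]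
  exact cfc_congr fun t ht => (Real.rpow_mul (spec_pos hN ht).le q s).symm

lemma mpow_posdef {N : Matrix (Fin n) (Fin n) ℂ} (hN : N.PosDef) (p : ℝ) :
    (cfc (fun t : ℝ => t ^ p) N).PosDef :=
  posdef_cfc hN.1 fun t ht => Real.rpow_pos_of_pos (spec_pos hN ht) p

end MeanPowAux

open MeanPowAux in
theorem mean_pow_r_le_power_mean_pow_r {n : ℕ} {A B : Matrix (Fin n) (Fin n) ℂ}
    (q r : ℝ) (hq : 1 < q) (hr1 : 1 < r) (hr2 : r ≤ min 2 q)
    (hA : A.PosDef) (hB : B.PosDef) :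
    (mpow ((2 : ℂ)⁻¹ • (mpow A q + mpow B q)) (r / q)
      - mpow ((2 : ℂ)⁻¹ • (A + B)) r).PosSemidef := by
  have hq0 : (0:ℝ) < q := by linarith
  have hr0 : (0:ℝ) < r := by linarith
  have hr2' : r ≤ 2 := hr2.trans (min_le_left _ _)
  have hrq : r ≤ q := hr2.trans (min_le_right _ _)
  -- unfold mpow to cfc
  show (cfc (fun t : ℝ => t ^ (r/q)) ((2 : ℂ)⁻¹ • (cfc (fun t : ℝ => t ^ q) A
      + cfc (fun t : ℝ => t ^ q) B))
    - cfc (fun t : ℝ => t ^ r) ((2 : ℂ)⁻¹ • (A + B))).PosSemidef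
  rw [csmul, csmul]
  set C := cfc (fun t : ℝ => t ^ q) A with hCdef
  set D := cfc (fun t : ℝ => t ^ q) B with hDdef
  have hC : C.PosDef := mpow_posdef hA q
  have hD : D.PosDef := mpow_posdef hB q
  have hM1 : ((2⁻¹:ℝ) • (A + B)).PosDef := posdef_half_add hA hB
  -- the convexity part
  have hconv : ((2⁻¹ : ℝ) • (cfc (fun t : ℝ => t ^ r) A + cfc (fun t : ℝ => t ^ r) B)
      - cfc (fun t : ℝ => t ^ r) ((2⁻¹ : ℝ) • (A + B))).PosSemidef := by
    rcases eq_or_lt_of_le hr2' with heq | hlt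
    · subst heq
      exact main_convex2 hA hB
    · exact main_convex hA hB hr1 hlt
  have hcompA : cfc (fun t : ℝ => t ^ (r/q)) C = cfc (fun t : ℝ => t ^ r) A := by
    rw [hCdef, comp_pow hA hq0.ne', show q * (r/q) = r by field_simp]
  have hcompB : cfc (fun t : ℝ => t ^ (r/q)) D = cfc (fun t : ℝ => t ^ r) B := by
    rw [hDdef, comp_pow hB hq0.ne', show q * (r/q) = r by field_simp]
  rcases eq_or_lt_of_le hrq with heq | hlt
  · -- r = q, so r/q = 1 and the concavity step is trivial
    have hs1 : r / q = 1 := by rw [heq]; exact div_self hq0.ne'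
    have hpow1 : cfc (fun t : ℝ => t ^ (r/q)) ((2⁻¹:ℝ) • (C + D)) = (2⁻¹:ℝ) • (C + D) := by
      have hsa : IsSelfAdjoint ((2⁻¹:ℝ) • (C + D)) := (posdef_half_add hC hD).1
      rw [hs1, cfc_congr (g := fun t : ℝ => t) (fun t _ => Real.rpow_one t),
        cfc_id' ℝ _ hsa]
    rw [hpow1, hCdef, hDdef, ← heq]
    exact hconv
  · -- r < q : genuine concavity step
    have hs0 : 0 < r / q := div_pos hr0 hq0
    have hs1 : r / q < 1 := (div_lt_one hq0).mpr hlt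
    have hconc := main_concave hC hD hs0 hs1
    rw [hcompA, hcompB] at hconc
    have hsplit : cfc (fun t : ℝ => t ^ (r/q)) ((2⁻¹:ℝ) • (C + D))
        - cfc (fun t : ℝ => t ^ r) ((2⁻¹ : ℝ) • (A + B))
        = (cfc (fun t : ℝ => t ^ (r/q)) ((2⁻¹:ℝ) • (C + D))
            - (2⁻¹ : ℝ) • (cfc (fun t : ℝ => t ^ r) A + cfc (fun t : ℝ => t ^ r) B))
          + ((2⁻¹ : ℝ) • (cfc (fun t : ℝ => t ^ r) A + cfc (fun t : ℝ => t ^ r) B)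
            - cfc (fun t : ℝ => t ^ r) ((2⁻¹ : ℝ) • (A + B))) := by
      abel
    rw [hsplit]
    exact hconc.add hconv
end

section
/- For 1 ≤ r ≤ 2 and positive semidefinite n×n complex matrices A, B, one has ((A + B)/2)^r ≤ (A^r + B^r)/2 in the Loewner order. -/
open scoped ComplexOrder
open Set MeasureTheory Matrix

section Helpers

variable {n : ℕ}

private lemma contOn (f : ℝ → ℝ) (X : Matrix (Fin n) (Fin n) ℂ) :
    ContinuousOn f (spectrum ℝ X) :=
  Set.Finite.continuousOn X.finite_real_spectrum f

private lemma spec_nonneg {X : Matrix (Fin n) (Fin n) ℂ} (hX : X.PosSemidef) :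
    ∀ t ∈ spectrum ℝ X, 0 ≤ t := by
  rw [hX.1.spectrum_real_eq_range_eigenvalues]
  rintro t ⟨i, rfl⟩
  exact hX.eigenvalues_nonneg i

private lemma creal_smul (x : ℝ) (M : Matrix (Fin n) (Fin n) ℂ) :
    ((x : ℂ)) • M = x • M := by
  ext i j
  simp [Complex.real_smul]

private lemma psd_rsmul {X : Matrix (Fin n) (Fin n) ℂ} (hX : X.PosSemidef) (c : ℝ)
    (hc : 0 ≤ c) : (c • X).PosSemidef := by
  refine Matrix.PosSemidef.of_dotProduct_mulVec_nonneg ?_ (fun x => ?_)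
  · have := hX.1
    unfold Matrix.IsHermitian at *
    rw [Matrix.conjTranspose_smul, this]
    norm_num
  · rw [Matrix.smul_mulVec, dotProduct_smul]
    have h := hX.dotProduct_mulVec_nonneg x
    rw [Complex.real_smul]
    exact mul_nonneg (by exact_mod_cast Complex.zero_le_real.mpr hc) h

private lemma pd_rsmul {X : Matrix (Fin n) (Fin n) ℂ} (hX : X.PosDef) (c : ℝ)
    (hc : 0 < c) : (c • X).PosDef := by
  refine Matrix.PosDef.of_dotProduct_mulVec_pos ?_ (fun x hx => ?_)
  · have h := hX.1
    unfold Matrix.IsHermitian at *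
    rw [Matrix.conjTranspose_smul, h]
    norm_num
  · rw [Matrix.smul_mulVec, dotProduct_smul]
    have h := hX.dotProduct_mulVec_pos hx
    rw [Complex.real_smul]
    exact mul_pos (by exact_mod_cast hc) h

/-- cfc of `(t+λ)⁻¹` is the inverse of `X + λ•1`. -/
private lemma cfc_res {X : Matrix (Fin n) (Fin n) ℂ} (hX : X.PosSemidef) {lam : ℝ}
    (hlam : 0 < lam) :
    cfc (fun t : ℝ => (t + lam)⁻¹) X = (X + lam • 1)⁻¹ := by
  have hXsa : IsSelfAdjoint X := hX.1
  have h1 : cfc (fun t : ℝ => t + lam) X = X + lam • 1 := by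
    rw [cfc_add X _ _ (contOn _ _) (contOn _ _), cfc_id' ℝ X, cfc_const lam X,
      Algebra.algebraMap_eq_smul_one]
  have h2 : cfc (fun t : ℝ => (t + lam)⁻¹) X * cfc (fun t : ℝ => t + lam) X = 1 := by
    rw [← cfc_mul _ _ X (contOn _ _) (contOn _ _)]
    have : Set.EqOn (fun t : ℝ => (t + lam)⁻¹ * (t + lam)) (fun _ => (1:ℝ)) (spectrum ℝ X) := by
      intro t ht
      have h0 := spec_nonneg hX t ht
      field_simp
    rw [cfc_congr this, cfc_const_one ℝ X]
  rw [h1] at h2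
  exact (Matrix.inv_eq_left_inv h2).symm

private lemma cfc_decomp {X : Matrix (Fin n) (Fin n) ℂ} (hX : X.PosSemidef) {lam : ℝ}
    (hlam : 0 < lam) :
    cfc (fun t : ℝ => t ^ 2 * (t + lam)⁻¹) X
      = X - lam • 1 + (lam ^ 2) • (X + lam • 1)⁻¹ := by
  have hXsa : IsSelfAdjoint X := hX.1
  have hcongr : Set.EqOn (fun t : ℝ => t ^ 2 * (t + lam)⁻¹)
      (fun t : ℝ => (t - lam) + lam ^ 2 • (t + lam)⁻¹) (spectrum ℝ X) := by
    intro t ht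
    have h0 := spec_nonneg hX t ht
    have : t + lam ≠ 0 := by positivity
    simp only [smul_eq_mul]
    field_simp
    ring
  rw [cfc_congr hcongr, cfc_add X _ _ (contOn _ _) (contOn _ _),
    cfc_sub _ _ X (contOn _ _) (contOn _ _), cfc_id' ℝ X, cfc_const lam X,
    cfc_smul (lam ^ 2) _ X (contOn _ _), cfc_res hX hlam,
    Algebra.algebraMap_eq_smul_one]

private lemma harm_ineq {M N : Matrix (Fin n) (Fin n) ℂ} (hM : M.PosDef) (hN : N.PosDef) :
    (M⁻¹ + N⁻¹ - (4:ℝ) • (M + N)⁻¹).PosSemidef := by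
  have hP : (M + N).PosDef := hM.add_posSemidef hN.posSemidef
  have hM1 : M * M⁻¹ = 1 := Matrix.mul_nonsing_inv _ (isUnit_iff_ne_zero.mpr hM.det_pos.ne')
  have hM2 : M⁻¹ * M = 1 := Matrix.nonsing_inv_mul _ (isUnit_iff_ne_zero.mpr hM.det_pos.ne')
  have hN1 : N * N⁻¹ = 1 := Matrix.mul_nonsing_inv _ (isUnit_iff_ne_zero.mpr hN.det_pos.ne')
  have hN2 : N⁻¹ * N = 1 := Matrix.nonsing_inv_mul _ (isUnit_iff_ne_zero.mpr hN.det_pos.ne')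
  have hP1 : (M + N) * (M + N)⁻¹ = 1 :=
    Matrix.mul_nonsing_inv _ (isUnit_iff_ne_zero.mpr hP.det_pos.ne')
  have hP2 : (M + N)⁻¹ * (M + N) = 1 :=
    Matrix.nonsing_inv_mul _ (isUnit_iff_ne_zero.mpr hP.det_pos.ne')
  have hMc : ∀ X : Matrix (Fin n) (Fin n) ℂ, M * (M⁻¹ * X) = X := fun X => by
    rw [← mul_assoc, hM1, one_mul]
  have hNc : ∀ X : Matrix (Fin n) (Fin n) ℂ, N * (N⁻¹ * X) = X := fun X => by
    rw [← mul_assoc, hN1, one_mul]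
  have key : (M + N) * (M⁻¹ + N⁻¹ - (4:ℝ) • (M + N)⁻¹) * (M + N)
      = (N - M) * M⁻¹ * (N - M) + (N - M) * N⁻¹ * (N - M) := by
    have expand : (M + N) * (M⁻¹ + N⁻¹ - (4:ℝ) • (M + N)⁻¹) * (M + N)
        = (M + N) * (M⁻¹ + N⁻¹) * (M + N) - (4:ℝ) • ((M + N) * (M + N)⁻¹ * (M + N)) := by
      simp only [mul_sub, sub_mul, mul_smul_comm, smul_mul_assoc]
    rw [expand, hP1, one_mul]
    simp only [mul_add, add_mul, sub_mul, mul_sub, mul_assoc, hM2, hN2, mul_one, hMc, hNc]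
    module
  have hEeq : M⁻¹ + N⁻¹ - (4:ℝ) • (M + N)⁻¹
      = (M + N)⁻¹ * ((N - M) * M⁻¹ * (N - M) + (N - M) * N⁻¹ * (N - M)) * (M + N)⁻¹ := by
    rw [← key]
    calc M⁻¹ + N⁻¹ - (4:ℝ) • (M + N)⁻¹
        = ((M+N)⁻¹ * (M+N)) * (M⁻¹ + N⁻¹ - (4:ℝ) • (M + N)⁻¹) * ((M+N) * (M+N)⁻¹) := by
          rw [hP2, hP1, one_mul, mul_one]
    _ = (M + N)⁻¹ * ((M + N) * (M⁻¹ + N⁻¹ - (4:ℝ) • (M + N)⁻¹) * (M + N)) * (M + N)⁻¹ := by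
          simp only [mul_assoc]
  rw [hEeq]
  have hD : (N - M).conjTranspose = N - M := hN.1.sub hM.1
  have hPinv : ((M + N)⁻¹).conjTranspose = (M + N)⁻¹ := hP.inv.1
  have inner : ((N - M) * M⁻¹ * (N - M) + (N - M) * N⁻¹ * (N - M)).PosSemidef := by
    have h1 := hM.inv.posSemidef.conjTranspose_mul_mul_same (N - M)
    have h2 := hN.inv.posSemidef.conjTranspose_mul_mul_same (N - M)
    rw [hD] at h1 h2
    exact h1.add h2
  have := inner.conjTranspose_mul_mul_same (M + N)⁻¹
  rwa [hPinv] at this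

private lemma keyPSD {A B : Matrix (Fin n) (Fin n) ℂ} (hA : A.PosSemidef) (hB : B.PosSemidef)
    {lam : ℝ} (hlam : 0 < lam) :
    (cfc (fun t : ℝ => t ^ 2 * (t + lam)⁻¹) A + cfc (fun t : ℝ => t ^ 2 * (t + lam)⁻¹) B
      - (2:ℝ) • cfc (fun t : ℝ => t ^ 2 * (t + lam)⁻¹) ((2:ℝ)⁻¹ • (A + B))).PosSemidef := by
  have hC : ((2:ℝ)⁻¹ • (A + B)).PosSemidef := psd_rsmul (hA.add hB) _ (by norm_num)
  have hlam1 : ((lam • 1 : Matrix (Fin n) (Fin n) ℂ)).PosDef := pd_rsmul Matrix.PosDef.one _ hlam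
  have hM : (A + lam • 1).PosDef := Matrix.PosDef.posSemidef_add hA hlam1
  have hN : (B + lam • 1).PosDef := Matrix.PosDef.posSemidef_add hB hlam1
  have hP : ((A + lam • 1) + (B + lam • 1)).PosDef := hM.add_posSemidef hN.posSemidef
  have hPC : ((2:ℝ)⁻¹ • (A + B) + lam • 1)
      = (2:ℝ)⁻¹ • ((A + lam • 1) + (B + lam • 1)) := by module
  have hPinv : ((2:ℝ)⁻¹ • (A + B) + lam • 1)⁻¹
      = (2:ℝ) • ((A + lam • 1) + (B + lam • 1))⁻¹ := by
    have hP2 : ((A + lam • 1) + (B + lam • 1))⁻¹ * ((A + lam • 1) + (B + lam • 1)) = 1 :=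
      Matrix.nonsing_inv_mul _ (isUnit_iff_ne_zero.mpr hP.det_pos.ne')
    refine Matrix.inv_eq_left_inv ?_
    rw [hPC, smul_mul_smul_comm]
    norm_num [hP2]
  rw [cfc_decomp hA hlam, cfc_decomp hB hlam, cfc_decomp hC hlam, hPinv]
  have : A - lam • 1 + lam ^ 2 • (A + lam • 1)⁻¹ + (B - lam • 1 + lam ^ 2 • (B + lam • 1)⁻¹)
      - (2:ℝ) • ((2:ℝ)⁻¹ • (A + B) - lam • 1
          + lam ^ 2 • (2:ℝ) • ((A + lam • 1) + (B + lam • 1))⁻¹)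
      = (lam ^ 2) • ((A + lam • 1)⁻¹ + (B + lam • 1)⁻¹
          - (4:ℝ) • ((A + lam • 1) + (B + lam • 1))⁻¹) := by
    module
  rw [this]
  exact psd_rsmul (harm_ineq hM hN) _ (by positivity)

private lemma quad {X : Matrix (Fin n) (Fin n) ℂ} (hX : X.IsHermitian) (f : ℝ → ℝ)
    (v : Fin n → ℂ) :
    dotProduct (star v) (cfc f X *ᵥ v)
      = ((∑ i, Complex.normSq ((star (hX.eigenvectorUnitary : Matrix (Fin n) (Fin n) ℂ) *ᵥ v) i)
          * f (hX.eigenvalues i) : ℝ) : ℂ) := by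
  rw [Matrix.IsHermitian.cfc_eq hX f]
  unfold Matrix.IsHermitian.cfc
  set U : Matrix (Fin n) (Fin n) ℂ := (hX.eigenvectorUnitary : Matrix (Fin n) (Fin n) ℂ) with hU
  set u : Fin n → ℂ := star U *ᵥ v with hu
  have h1 : (U * Matrix.diagonal (RCLike.ofReal ∘ f ∘ hX.eigenvalues) * star U) *ᵥ v
      = U *ᵥ (Matrix.diagonal (RCLike.ofReal ∘ f ∘ hX.eigenvalues) *ᵥ u) := by
    rw [hu, Matrix.mulVec_mulVec, Matrix.mulVec_mulVec]
  rw [show (Unitary.conjStarAlgAut ℂ (Matrix (Fin n) (Fin n) ℂ) hX.eigenvectorUnitary)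
      (Matrix.diagonal (RCLike.ofReal ∘ f ∘ hX.eigenvalues))
      = U * Matrix.diagonal (RCLike.ofReal ∘ f ∘ hX.eigenvalues) * star U from rfl,
    h1, Matrix.dotProduct_mulVec]
  have h2 : Matrix.vecMul (star v) U = star u := by
    rw [hu, Matrix.star_mulVec, Matrix.star_eq_conjTranspose, Matrix.conjTranspose_conjTranspose]
  rw [h2]
  simp only [dotProduct, Matrix.mulVec_diagonal, Function.comp_apply]
  have hRC : (RCLike.ofReal : ℝ → ℂ) = Complex.ofReal := rfl
  rw [hRC, Complex.ofReal_sum]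
  refine Finset.sum_congr rfl fun i _ => ?_
  rw [Pi.star_apply, RCLike.star_def]
  have h3 : (starRingEnd ℂ) (u i) * ((f (hX.eigenvalues i) : ℂ) * u i)
      = (f (hX.eigenvalues i) : ℂ) * (u i * (starRingEnd ℂ) (u i)) := by ring
  rw [h3, Complex.mul_conj]
  push_cast
  ring

end Helpers

section Scalar

variable {s : ℝ}

private lemma phi_contOn : ContinuousOn (fun μ : ℝ => μ ^ (s-1) * (1+μ)⁻¹) (Ioi 0) :=
  fun x hx => (((Real.continuousAt_rpow_const x _ (Or.inl (ne_of_gt hx))).mul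
    (((continuous_const.add continuous_id).continuousAt).inv₀
      (by have : (0:ℝ) < x := hx; show (1:ℝ) + x ≠ 0; positivity))).continuousWithinAt)

private lemma phi_integrable (hs0 : 0 < s) (hs1 : s < 1) :
    IntegrableOn (fun μ : ℝ => μ ^ (s-1) * (1+μ)⁻¹) (Ioi 0) := by
  have hsplit : Ioc (0:ℝ) 1 ∪ Ioi 1 = Ioi 0 := Ioc_union_Ioi_eq_Ioi zero_le_one
  rw [← hsplit]
  refine IntegrableOn.union ?_ ?_
  · have base1 : IntegrableOn (fun μ : ℝ => μ ^ (s-1)) (Ioc (0:ℝ) 1) := by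
      have h := intervalIntegral.intervalIntegrable_rpow' (a := 0) (b := 1) (r := s-1)
        (by linarith)
      rwa [intervalIntegrable_iff_integrableOn_Ioc_of_le zero_le_one] at h
    refine base1.mono'
      ((phi_contOn.mono Ioc_subset_Ioi_self).aestronglyMeasurable measurableSet_Ioc) ?_
    rw [ae_restrict_iff' measurableSet_Ioc]
    refine Filter.Eventually.of_forall fun x hx => ?_
    have hx0 : 0 < x := hx.1
    have h1 : (1+x)⁻¹ ≤ 1 := by
      rw [inv_le_one_iff₀]; right; linarith
    rw [Real.norm_eq_abs, abs_of_nonneg (by positivity)]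
    calc x ^ (s-1) * (1+x)⁻¹ ≤ x ^ (s-1) * 1 :=
          mul_le_mul_of_nonneg_left h1 (by positivity)
    _ = x ^ (s-1) := mul_one _
  · have base2 : IntegrableOn (fun μ : ℝ => μ ^ (s-2)) (Ioi (1:ℝ)) :=
      (integrableOn_Ioi_rpow_iff zero_lt_one).mpr (by linarith)
    refine base2.mono'
      ((phi_contOn.mono (Ioi_subset_Ioi zero_le_one)).aestronglyMeasurable measurableSet_Ioi) ?_
    rw [ae_restrict_iff' measurableSet_Ioi]
    refine Filter.Eventually.of_forall fun x hx => ?_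
    have hx0 : (0:ℝ) < x := lt_trans zero_lt_one hx
    rw [Real.norm_eq_abs, abs_of_nonneg (by positivity)]
    have h1 : (1+x)⁻¹ ≤ x⁻¹ := by
      apply inv_anti₀ hx0; linarith
    calc x ^ (s-1) * (1+x)⁻¹ ≤ x ^ (s-1) * x⁻¹ :=
          mul_le_mul_of_nonneg_left h1 (by positivity)
    _ = x ^ (s-2) := by
        rw [show s-2 = (s-1) + (-1) by ring, Real.rpow_add hx0, Real.rpow_neg_one]

private lemma c_pos (hs0 : 0 < s) (hs1 : s < 1) :
    0 < ∫ μ in Ioi (0:ℝ), μ ^ (s-1) * (1+μ)⁻¹ := by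
  rw [setIntegral_pos_iff_support_of_nonneg_ae ?_ (phi_integrable hs0 hs1)]
  · refine lt_of_lt_of_le ?_ (measure_mono (?_ :
      Ioi (0:ℝ) ⊆ Function.support (fun μ : ℝ => μ ^ (s-1) * (1+μ)⁻¹) ∩ Ioi 0))
    · simp [Real.volume_Ioi]
    · intro x hx
      have hx0 : (0:ℝ) < x := hx
      refine ⟨?_, hx⟩
      show x ^ (s-1) * (1+x)⁻¹ ≠ 0
      positivity
  · filter_upwards [ae_restrict_mem measurableSet_Ioi] with x hx
    have hx0 : (0:ℝ) < x := hx
    positivity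

private lemma pointwise_scale {t : ℝ} (ht : 0 < t) {lam : ℝ} (hlam : 0 < lam) :
    t ^ s * ((t⁻¹ * lam) ^ (s-1) * (1 + t⁻¹ * lam)⁻¹)
      = lam ^ (s-1) * (t^2 * (t + lam)⁻¹) := by
  have h1 : (t⁻¹ * lam) ^ (s-1) = (t ^ (s-1))⁻¹ * lam ^ (s-1) := by
    rw [Real.mul_rpow (by positivity) hlam.le, Real.inv_rpow ht.le]
  have h2 : (1 + t⁻¹ * lam)⁻¹ = t * (t+lam)⁻¹ := by
    rw [show 1 + t⁻¹*lam = (t+lam) * t⁻¹ by field_simp, mul_inv, inv_inv]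
    ring
  rw [h1, h2]
  have h3 : t ^ s * (t ^ (s-1))⁻¹ = t := by
    rw [← Real.rpow_neg ht.le, ← Real.rpow_add ht, show s + -(s-1) = 1 by ring, Real.rpow_one]
  calc t ^ s * ((t ^ (s-1))⁻¹ * lam ^ (s-1) * (t * (t+lam)⁻¹))
      = (t ^ s * (t ^ (s-1))⁻¹) * t * (lam ^ (s-1) * (t+lam)⁻¹) := by ring
  _ = lam ^ (s-1) * (t^2 * (t + lam)⁻¹) := by rw [h3]; ring

private lemma scalar_int (hs0 : 0 < s) (hs1 : s < 1) {t : ℝ} (ht : 0 ≤ t) :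
    IntegrableOn (fun lam : ℝ => lam ^ (s-1) * (t^2 * (t + lam)⁻¹)) (Ioi 0) := by
  rcases ht.eq_or_lt with h | h
  · refine (integrable_zero _ _ _).integrableOn.congr_fun ?_ measurableSet_Ioi
    intro x _
    simp [← h]
  · have h0 := (integrableOn_Ioi_comp_mul_left_iff
      (fun μ : ℝ => μ ^ (s-1) * (1+μ)⁻¹) 0 (inv_pos.mpr h)).mpr
      (by simpa using phi_integrable hs0 hs1)
    have h1 : IntegrableOn (fun x : ℝ => t ^ s * ((t⁻¹ * x) ^ (s-1) * (1 + t⁻¹ * x)⁻¹))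
        (Ioi 0) := h0.const_mul (t ^ s)
    refine h1.congr_fun ?_ measurableSet_Ioi
    intro lam hlam
    exact pointwise_scale h hlam

private lemma scalar_eq (hs0 : 0 < s) (hs1 : s < 1) {t : ℝ} (ht : 0 ≤ t) :
    ∫ lam in Ioi (0:ℝ), lam ^ (s-1) * (t^2 * (t + lam)⁻¹)
      = t ^ (s+1) * ∫ μ in Ioi (0:ℝ), μ ^ (s-1) * (1+μ)⁻¹ := by
  rcases ht.eq_or_lt with h | h
  · rw [setIntegral_congr_fun measurableSet_Ioi (g := fun _ => (0:ℝ))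
      (fun x _ => by simp [← h]), integral_zero, ← h, Real.zero_rpow (by positivity), zero_mul]
  · calc ∫ lam in Ioi (0:ℝ), lam ^ (s-1) * (t^2 * (t + lam)⁻¹)
        = ∫ lam in Ioi (0:ℝ), t ^ s * ((t⁻¹ * lam) ^ (s-1) * (1 + t⁻¹ * lam)⁻¹) :=
          setIntegral_congr_fun measurableSet_Ioi (fun lam hlam => (pointwise_scale h hlam).symm)
    _ = t ^ s * ∫ lam in Ioi (0:ℝ), ((t⁻¹ * lam) ^ (s-1) * (1 + t⁻¹ * lam)⁻¹) :=
          integral_const_mul _ _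
    _ = t ^ s * (t * ∫ μ in Ioi (0:ℝ), μ ^ (s-1) * (1+μ)⁻¹) := by
          rw [integral_comp_mul_left_Ioi (fun μ : ℝ => μ ^ (s-1) * (1+μ)⁻¹) 0 (inv_pos.mpr h)]
          simp [smul_eq_mul, inv_inv]
    _ = t ^ (s+1) * ∫ μ in Ioi (0:ℝ), μ ^ (s-1) * (1+μ)⁻¹ := by
          rw [Real.rpow_add_one h.ne']; ring

end Scalar

theorem pow_r_operator_convex {n : ℕ} {A B : Matrix (Fin n) (Fin n) ℂ}
    (r : ℝ) (hr1 : 1 ≤ r) (hr2 : r ≤ 2)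
    (hA : A.PosSemidef) (hB : B.PosSemidef) :
    ((2 : ℂ)⁻¹ • (mpow A r + mpow B r) - mpow ((2 : ℂ)⁻¹ • (A + B)) r).PosSemidef := by
  have hbr : ((2:ℂ)⁻¹ • (A + B)) = (2:ℝ)⁻¹ • (A + B) := by
    rw [show ((2:ℂ)⁻¹) = (((2:ℝ)⁻¹ : ℝ) : ℂ) by norm_num, creal_smul]
  have hCpsd : ((2:ℝ)⁻¹ • (A + B)).PosSemidef := psd_rsmul (hA.add hB) _ (by norm_num)
  rw [hbr]
  rcases eq_or_lt_of_le hr1 with h1 | h1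
  · -- r = 1
    have hm : ∀ (X : Matrix (Fin n) (Fin n) ℂ), X.PosSemidef → mpow X 1 = X := by
      intro X hX
      have hfun : (fun x : ℝ => x ^ (1:ℝ)) = fun x : ℝ => x := funext fun x => Real.rpow_one x
      show cfc (fun x : ℝ => x ^ (1:ℝ)) X = X
      rw [hfun]
      exact cfc_id' ℝ X hX.1
    rw [← h1, hm A hA, hm B hB, hm _ hCpsd, hbr, sub_self]
    exact Matrix.PosSemidef.zero
  rcases eq_or_lt_of_le hr2 with h2 | h2
  · -- r = 2
    have hsq : ∀ (X : Matrix (Fin n) (Fin n) ℂ), X.PosSemidef → mpow X 2 = X * X := by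
      intro X hX
      show cfc (fun x : ℝ => x ^ (2:ℝ)) X = X * X
      have hc : Set.EqOn (fun x : ℝ => x ^ (2:ℝ)) (fun x : ℝ => x ^ (2:ℕ)) (spectrum ℝ X) := by
        intro x _
        show x ^ (2:ℝ) = x ^ (2:ℕ)
        rw [← Real.rpow_natCast x 2]
        norm_num
      calc cfc (fun x : ℝ => x ^ (2:ℝ)) X = cfc (fun x : ℝ => x ^ (2:ℕ)) X := cfc_congr hc
      _ = X ^ 2 := cfc_pow_id X 2 hX.1
      _ = X * X := pow_two X
    rw [h2, hsq A hA, hsq B hB, hsq _ hCpsd]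
    have hid : (2:ℂ)⁻¹ • (A*A + B*B) - ((2:ℝ)⁻¹ • (A+B)) * ((2:ℝ)⁻¹ • (A+B))
        = (4:ℝ)⁻¹ • ((A - B) * (A - B)) := by
      rw [← hbr, smul_mul_smul_comm,
        show ((2:ℂ)⁻¹ * (2:ℂ)⁻¹) = (4:ℂ)⁻¹ by norm_num,
        show ((2:ℂ)⁻¹) = (((2:ℝ)⁻¹ : ℝ) : ℂ) by norm_num,
        show ((4:ℂ)⁻¹) = (((4:ℝ)⁻¹ : ℝ) : ℂ) by norm_num, creal_smul, creal_smul,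
        show (A+B)*(A+B) = A*A + A*B + B*A + B*B by noncomm_ring,
        show (A-B)*(A-B) = A*A - A*B - B*A + B*B by noncomm_ring]
      module
    rw [hid]
    have hherm : (A - B) * (A - B) = (A - B)ᴴ * (A - B) := by
      rw [Matrix.conjTranspose_sub, hA.1, hB.1]
    rw [hherm]
    exact psd_rsmul (Matrix.posSemidef_conjTranspose_mul_self (A - B)) _ (by norm_num)
  -- main case 1 < r < 2
  set s : ℝ := r - 1 with hs
  have hs0 : 0 < s := by simp only [hs]; linarith
  have hs1 : s < 1 := by simp only [hs]; linarith
  have hcpos := c_pos hs0 hs1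
  set c : ℝ := ∫ μ in Ioi (0:ℝ), μ ^ (s-1) * (1+μ)⁻¹ with hcdef
  -- generic representation for eigen-data
  have repr : ∀ (t w : Fin n → ℝ), (∀ i, 0 ≤ t i) →
      (IntegrableOn
          (fun lam => ∑ i, w i * (lam ^ (s-1) * ((t i)^2 * (t i + lam)⁻¹))) (Ioi 0) ∧
        ∫ lam in Ioi (0:ℝ), (∑ i, w i * (lam ^ (s-1) * ((t i)^2 * (t i + lam)⁻¹)))
          = c * ∑ i, w i * (t i) ^ r) := by
    intro t w ht
    have hint : ∀ i : Fin n,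
        IntegrableOn (fun lam => w i * (lam ^ (s-1) * ((t i)^2 * (t i + lam)⁻¹))) (Ioi 0) :=
      fun i => (scalar_int hs0 hs1 (ht i)).const_mul (w i)
    constructor
    · exact integrable_finset_sum _ (fun i _ => hint i)
    · rw [integral_finset_sum _ (fun i _ => hint i)]
      have : ∀ i : Fin n, ∫ lam in Ioi (0:ℝ), w i * (lam ^ (s-1) * ((t i)^2 * (t i + lam)⁻¹))
          = w i * ((t i) ^ (s+1) * c) := by
        intro i
        rw [integral_const_mul, scalar_eq hs0 hs1 (ht i)]
      simp only [this]
      rw [Finset.mul_sum]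
      refine Finset.sum_congr rfl fun i _ => ?_
      rw [show s + 1 = r by rw [hs]; ring]
      ring
  refine Matrix.PosSemidef.of_dotProduct_mulVec_nonneg ?_ ?_
  · -- Hermitian
    have h1 : IsSelfAdjoint (mpow A r) := cfc_predicate _ A
    have h2 : IsSelfAdjoint (mpow B r) := cfc_predicate _ B
    have h3 : IsSelfAdjoint (mpow ((2:ℝ)⁻¹ • (A + B)) r) := cfc_predicate _ _
    show _ᴴ = _
    rw [Matrix.conjTranspose_sub, Matrix.conjTranspose_smul, Matrix.conjTranspose_add]
    rw [show (mpow A r)ᴴ = mpow A r from h1, show (mpow B r)ᴴ = mpow B r from h2,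
      show (mpow ((2:ℝ)⁻¹ • (A + B)) r)ᴴ = _ from h3]
    norm_num
  · intro v
    have quadA := fun f => quad hA.1 f v
    have quadB := fun f => quad hB.1 f v
    have quadC := fun f => quad hCpsd.1 f v
    set tA := hA.1.eigenvalues
    set tB := hB.1.eigenvalues
    set tC := hCpsd.1.eigenvalues
    set wA := fun i => Complex.normSq
      ((star (hA.1.eigenvectorUnitary : Matrix (Fin n) (Fin n) ℂ) *ᵥ v) i)
    set wB := fun i => Complex.normSq
      ((star (hB.1.eigenvectorUnitary : Matrix (Fin n) (Fin n) ℂ) *ᵥ v) i)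
    set wC := fun i => Complex.normSq
      ((star (hCpsd.1.eigenvectorUnitary : Matrix (Fin n) (Fin n) ℂ) *ᵥ v) i)
    -- the target quadratic form as a real number
    have hform : dotProduct (star v)
        (((2:ℂ)⁻¹ • (mpow A r + mpow B r) - mpow ((2:ℝ)⁻¹ • (A + B)) r) *ᵥ v)
        = (((2:ℝ)⁻¹ * ((∑ i, wA i * (tA i) ^ r) + (∑ i, wB i * (tB i) ^ r))
            - (∑ i, wC i * (tC i) ^ r) : ℝ) : ℂ) := by
      rw [Matrix.sub_mulVec, dotProduct_sub, Matrix.smul_mulVec,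
        Matrix.add_mulVec, dotProduct_smul]
      rw [dotProduct_add]
      rw [show mpow A r = cfc (fun x : ℝ => x ^ r) A from rfl,
        show mpow B r = cfc (fun x : ℝ => x ^ r) B from rfl,
        show mpow ((2:ℝ)⁻¹ • (A + B)) r = cfc (fun x : ℝ => x ^ r) ((2:ℝ)⁻¹ • (A + B)) from rfl,
        quadA, quadB, quadC]
      rw [smul_eq_mul]
      push_cast
      ring
    rw [hform]
    rw [Complex.zero_le_real]
    -- per-lambda inequality on the sums
    have keylam : ∀ lam : ℝ, lam ∈ Ioi (0:ℝ) →
        0 ≤ (2:ℝ)⁻¹ * ((∑ i, wA i * (lam ^ (s-1) * ((tA i)^2 * (tA i + lam)⁻¹)))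
              + (∑ i, wB i * (lam ^ (s-1) * ((tB i)^2 * (tB i + lam)⁻¹))))
            - (∑ i, wC i * (lam ^ (s-1) * ((tC i)^2 * (tC i + lam)⁻¹))) := by
      intro lam hlam
      have hlam0 : (0:ℝ) < lam := hlam
      have hkey := (keyPSD hA hB hlam0).dotProduct_mulVec_nonneg v
      have hexp : dotProduct (star v)
          ((cfc (fun t : ℝ => t ^ 2 * (t + lam)⁻¹) A + cfc (fun t : ℝ => t ^ 2 * (t + lam)⁻¹) B
            - (2:ℝ) • cfc (fun t : ℝ => t ^ 2 * (t + lam)⁻¹) ((2:ℝ)⁻¹ • (A + B))) *ᵥ v)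
          = (((∑ i, wA i * ((tA i)^2 * (tA i + lam)⁻¹))
              + (∑ i, wB i * ((tB i)^2 * (tB i + lam)⁻¹))
              - 2 * (∑ i, wC i * ((tC i)^2 * (tC i + lam)⁻¹)) : ℝ) : ℂ) := by
        rw [Matrix.sub_mulVec, dotProduct_sub, Matrix.add_mulVec, dotProduct_add,
          Matrix.smul_mulVec, dotProduct_smul, quadA, quadB, quadC]
        rw [Complex.real_smul]
        push_cast
        ring
      rw [hexp, Complex.zero_le_real] at hkey
      have hfac : ∀ (w t : Fin n → ℝ),
          (∑ i, w i * (lam ^ (s-1) * ((t i)^2 * (t i + lam)⁻¹)))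
            = lam ^ (s-1) * ∑ i, w i * ((t i)^2 * (t i + lam)⁻¹) := by
        intro w t
        rw [Finset.mul_sum]
        exact Finset.sum_congr rfl fun i _ => by ring
      rw [hfac wA tA, hfac wB tB, hfac wC tC]
      have hpow : (0:ℝ) ≤ lam ^ (s-1) := Real.rpow_nonneg hlam0.le _
      nlinarith [mul_le_mul_of_nonneg_left hkey hpow]
    -- integrate
    have reprA := repr tA wA (fun i => hA.eigenvalues_nonneg i)
    have reprB := repr tB wB (fun i => hB.eigenvalues_nonneg i)
    have reprC := repr tC wC (fun i => hCpsd.eigenvalues_nonneg i)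
    have hcineq : 0 ≤ c * ((2:ℝ)⁻¹ * ((∑ i, wA i * (tA i) ^ r) + (∑ i, wB i * (tB i) ^ r))
        - (∑ i, wC i * (tC i) ^ r)) := by
      have hiA := reprA.1
      have hiB := reprB.1
      have hiC := reprC.1
      have heq : c * ((2:ℝ)⁻¹ * ((∑ i, wA i * (tA i) ^ r) + (∑ i, wB i * (tB i) ^ r))
          - (∑ i, wC i * (tC i) ^ r))
          = ∫ lam in Ioi (0:ℝ),
              ((2:ℝ)⁻¹ * ((∑ i, wA i * (lam ^ (s-1) * ((tA i)^2 * (tA i + lam)⁻¹)))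
                + (∑ i, wB i * (lam ^ (s-1) * ((tB i)^2 * (tB i + lam)⁻¹))))
              - (∑ i, wC i * (lam ^ (s-1) * ((tC i)^2 * (tC i + lam)⁻¹)))) := by
        have hiAB : IntegrableOn (fun lam : ℝ => (2:ℝ)⁻¹ *
            ((∑ i, wA i * (lam ^ (s-1) * ((tA i)^2 * (tA i + lam)⁻¹)))
              + (∑ i, wB i * (lam ^ (s-1) * ((tB i)^2 * (tB i + lam)⁻¹))))) (Ioi 0) :=
          (hiA.add hiB).const_mul _
        rw [integral_sub hiAB hiC, integral_const_mul,
          integral_add hiA hiB, reprA.2, reprB.2, reprC.2]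
        ring
      rw [heq]
      exact setIntegral_nonneg measurableSet_Ioi keylam
    nlinarith [hcineq, hcpos]
end

section
/- Let 0 < p ≤ 1 and let f be a continuous real function on [0, ∞) such that f(A # B) ≤ f(P_μ(p, A, B)) for all positive definite n×n complex matrices A, B and all n, where A # B is the matrix geometric mean and P_μ is the Kubo–Ando power mean. Then f is operator monotone on (0, ∞). -/
open scoped ComplexOrder

/-- The matrix geometric mean `A # B = A^(1/2) (A^(-1/2) B A^(-1/2))^(1/2) A^(1/2)`. -/
noncomputable def geomMean {n : ℕ} (A B : Matrix (Fin n) (Fin n) ℂ) :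
    Matrix (Fin n) (Fin n) ℂ :=
  mpow A (1 / 2) * mpow (mpow A (-(1 / 2)) * B * mpow A (-(1 / 2))) (1 / 2) * mpow A (1 / 2)

/-- The Kubo–Ando matrix power mean
`P_μ(p, A, B) = A^(1/2) ((I + (A^(-1/2) B A^(-1/2))^p)/2)^(1/p) A^(1/2)`. -/
noncomputable def Pmu {n : ℕ} (p : ℝ) (A B : Matrix (Fin n) (Fin n) ℂ) :
    Matrix (Fin n) (Fin n) ℂ :=
  mpow A (1 / 2) *
    mpow ((2 : ℂ)⁻¹ • (1 + mpow (mpow A (-(1 / 2)) * B * mpow A (-(1 / 2))) p)) (1 / p) *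
    mpow A (1 / 2)

namespace OMaux

open Matrix

variable {n : ℕ}

lemma contOnFin (f : ℝ → ℝ) {s : Set ℝ} (hs : s.Finite) : ContinuousOn f s := by
  rw [continuousOn_iff_continuous_restrict]
  have : Finite s := hs
  fun_prop

lemma contOn (f : ℝ → ℝ) (A : Matrix (Fin n) (Fin n) ℂ) :
    ContinuousOn f (spectrum ℝ A) :=
  contOnFin f A.finite_real_spectrum

lemma spec_pos {A : Matrix (Fin n) (Fin n) ℂ} (hA : A.PosDef) :
    ∀ x ∈ spectrum ℝ A, 0 < x := by
  intro x hx
  rw [hA.isHermitian.spectrum_real_eq_range_eigenvalues] at hx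
  obtain ⟨i, rfl⟩ := hx
  exact hA.eigenvalues_pos i

lemma posDef_conj' {A : Matrix (Fin n) (Fin n) ℂ} (hA : A.PosDef)
    (B : Matrix (Fin n) (Fin n) ℂ) (hB : ∃ C, C * B = 1) : (Bᴴ * A * B).PosDef := by
  obtain ⟨C, hC⟩ := hB
  refine Matrix.PosDef.of_dotProduct_mulVec_pos ?_ ?_
  · exact Matrix.isHermitian_conjTranspose_mul_mul B hA.1
  · intro x hx
    have hx' : B *ᵥ x ≠ 0 := by
      intro hcon
      apply hx
      have := congrArg (C *ᵥ ·) hcon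
      simpa [Matrix.mulVec_mulVec, hC] using this
    simpa only [Matrix.star_mulVec, Matrix.dotProduct_mulVec, Matrix.vecMul_vecMul]
      using hA.dotProduct_mulVec_pos hx'

lemma posDef_conj {A : Matrix (Fin n) (Fin n) ℂ} (hA : A.PosDef)
    (B : Matrix (Fin n) (Fin n) ℂ) (hB : ∃ C, C * Bᴴ = 1) : (B * A * Bᴴ).PosDef := by
  simpa using posDef_conj' hA Bᴴ (by simpa using hB)

lemma posDef_of_spectrum {A : Matrix (Fin n) (Fin n) ℂ} (hA : A.IsHermitian)
    (h : ∀ x ∈ spectrum ℝ A, 0 < x) : A.PosDef := by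
  rw [hA.spectral_theorem, Unitary.conjStarAlgAut_apply, Matrix.star_eq_conjTranspose]
  apply posDef_conj
  · rw [Matrix.posDef_diagonal_iff]
    intro i
    simpa using RCLike.ofReal_pos (K := ℂ) |>.mpr <| h _ (hA.eigenvalues_mem_spectrum_real i)
  · refine ⟨(hA.eigenvectorUnitary : Matrix (Fin n) (Fin n) ℂ), ?_⟩
    rw [← Matrix.star_eq_conjTranspose]
    exact Unitary.coe_mul_star_self _

lemma sa_of_pd {A : Matrix (Fin n) (Fin n) ℂ} (hA : A.PosDef) : IsSelfAdjoint A := hA.isHermitian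

lemma cfc_sa (f : ℝ → ℝ) (A : Matrix (Fin n) (Fin n) ℂ) : IsSelfAdjoint (cfc f A) :=
  cfc_predicate f A

lemma cfc_posDef {f : ℝ → ℝ} {A : Matrix (Fin n) (Fin n) ℂ} (hA : A.PosDef)
    (hf : ∀ x ∈ spectrum ℝ A, 0 < f x) : (cfc f A).PosDef := by
  apply posDef_of_spectrum (cfc_sa f A)
  intro x hx
  rw [cfc_map_spectrum f A (sa_of_pd hA) (contOn f A)] at hx
  obtain ⟨y, hy, rfl⟩ := hx
  exact hf y hy

lemma cfc_mul' (f g : ℝ → ℝ) (A : Matrix (Fin n) (Fin n) ℂ) :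
    cfc f A * cfc g A = cfc (fun x => f x * g x) A :=
  (cfc_mul f g A (contOn f A) (contOn g A)).symm

lemma mpow_mul_mpow {A : Matrix (Fin n) (Fin n) ℂ} (hA : A.PosDef) (r s : ℝ) :
    mpow A r * mpow A s = mpow A (r + s) := by
  rw [mpow, mpow, mpow, cfc_mul']
  exact cfc_congr fun x hx => (Real.rpow_add (spec_pos hA x hx) r s).symm

lemma mpow_zero {A : Matrix (Fin n) (Fin n) ℂ} (hA : A.PosDef) : mpow A 0 = 1 := by
  rw [mpow]
  calc cfc (fun x : ℝ => x ^ (0:ℝ)) A = cfc (1 : ℝ → ℝ) A :=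
        cfc_congr fun x _ => Real.rpow_zero x
    _ = 1 := cfc_one ℝ A (sa_of_pd hA)

lemma mpow_one' {A : Matrix (Fin n) (Fin n) ℂ} (hA : A.PosDef) : mpow A 1 = A := by
  rw [mpow]
  calc cfc (fun x : ℝ => x ^ (1:ℝ)) A = cfc (id : ℝ → ℝ) A :=
        cfc_congr fun x _ => Real.rpow_one x
    _ = A := cfc_id ℝ A (sa_of_pd hA)

lemma mpow_posDef {A : Matrix (Fin n) (Fin n) ℂ} (hA : A.PosDef) (r : ℝ) :
    (mpow A r).PosDef :=
  cfc_posDef hA fun x hx => Real.rpow_pos_of_pos (spec_pos hA x hx) r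

lemma mpow_cfc (g : ℝ → ℝ) {A : Matrix (Fin n) (Fin n) ℂ} (hA : IsSelfAdjoint A) (r : ℝ) :
    mpow (cfc g A) r = cfc (fun x => g x ^ r) A := by
  rw [mpow, ← cfc_comp (fun x : ℝ => x ^ r) g A hA
    (contOnFin _ (Matrix.finite_real_spectrum.image g)) (contOn _ _)]
  rfl

lemma one_le_spectrum {Z : Matrix (Fin n) (Fin n) ℂ} (hZ : (Z - 1).PosSemidef) :
    ∀ x ∈ spectrum ℝ Z, 1 ≤ x := by
  intro x hx
  have h1 : x = (x - 1) + 1 := by ring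
  rw [h1, spectrum.add_mem_iff] at hx
  have h2 : -(algebraMap ℝ (Matrix (Fin n) (Fin n) ℂ)) 1 + Z = Z - 1 := by
    rw [_root_.map_one]; abel
  rw [h2] at hx
  rw [hZ.isHermitian.spectrum_real_eq_range_eigenvalues] at hx
  obtain ⟨i, hi⟩ := hx
  have := hZ.eigenvalues_nonneg i
  rw [hi] at this
  linarith

lemma posDef_conj_herm {A B : Matrix (Fin n) (Fin n) ℂ} (hA : A.PosDef)
    (hB : IsSelfAdjoint B) (hinv : ∃ C, C * B = 1) : (B * A * B).PosDef := by
  have hBH : Bᴴ = B := by rw [← Matrix.star_eq_conjTranspose]; exact hB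
  have := posDef_conj hA B (by rw [hBH]; exact hinv)
  rwa [hBH] at this

lemma posSemidef_conj_herm {A B : Matrix (Fin n) (Fin n) ℂ} (hA : A.PosSemidef)
    (hB : IsSelfAdjoint B) : (B * A * B).PosSemidef := by
  have hBH : Bᴴ = B := by rw [← Matrix.star_eq_conjTranspose]; exact hB
  have := hA.mul_mul_conjTranspose_same B
  rwa [hBH] at this

/-- Conjugation by a matrix whose inverse is its star, as a star algebra hom. -/
noncomputable def conjSAH (M : Matrix (Fin n) (Fin n) ℂ) (h1 : M * star M = 1)
    (h2 : star M * M = 1) : Matrix (Fin n) (Fin n) ℂ →⋆ₐ[ℂ] Matrix (Fin n) (Fin n) ℂ where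
  toFun x := M * x * star M
  map_one' := by show M * 1 * star M = 1; rw [mul_one, h1]
  map_mul' x y := by
    show M * (x * y) * star M = M * x * star M * (M * y * star M)
    have : M * x * star M * (M * y * star M) = M * x * (star M * M) * y * star M := by
      simp only [mul_assoc]
    rw [this, h2, mul_one]
    simp only [mul_assoc]
  map_zero' := by show M * 0 * star M = 0; simp
  map_add' x y := by show M * (x + y) * star M = _; simp [mul_add, add_mul]
  commutes' r := by
    show M * algebraMap ℂ _ r * star M = _
    simp only [Algebra.algebraMap_eq_smul_one, mul_smul_comm, smul_mul_assoc, mul_one, h1]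
  map_star' x := by
    show M * star x * star M = star (M * x * star M)
    simp only [StarMul.star_mul, star_star, mul_assoc]

lemma cfc_conj (f : ℝ → ℝ) (M C : Matrix (Fin n) (Fin n) ℂ) (h1 : M * star M = 1)
    (h2 : star M * M = 1) (hC : IsSelfAdjoint C) :
    cfc f (M * C * star M) = M * cfc f C * star M := by
  have hcont : Continuous (conjSAH M h1 h2) := by
    show Continuous fun x => M * x * star M
    exact (continuous_const.matrix_mul continuous_id).matrix_mul continuous_const
  have hsa : IsSelfAdjoint (M * C * star M) := by
    show star _ = _
    simp only [StarMul.star_mul, star_star, hC.star_eq, mul_assoc]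
  have := StarAlgHomClass.map_cfc (conjSAH M h1 h2) f C (contOn f C) hcont hC hsa
  exact this.symm

noncomputable def gfun (p : ℝ) : ℝ → ℝ := fun w => ((w ^ p + w ^ (-p)) / 2) ^ (1 / p)

lemma gfun_one (p : ℝ) : gfun p 1 = 1 := by
  simp [gfun]

lemma gfun_ge {p : ℝ} (hp0 : 0 < p) {w : ℝ} (hw : 1 ≤ w) :
    w / 2 ^ (1 / p) ≤ gfun p w := by
  have hw0 : 0 < w := lt_of_lt_of_le one_pos hw
  have h1 : w ^ p / 2 ≤ (w ^ p + w ^ (-p)) / 2 := by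
    have := Real.rpow_nonneg hw0.le (-p)
    linarith
  have h2 : (w ^ p / 2) ^ (1 / p) ≤ gfun p w := by
    apply Real.rpow_le_rpow (by positivity) h1 (by positivity)
  calc w / 2 ^ (1 / p) = (w ^ p / 2) ^ (1 / p) := by
        rw [Real.div_rpow (by positivity) (by norm_num), ← Real.rpow_mul hw0.le,
          mul_one_div_cancel hp0.ne', Real.rpow_one]
    _ ≤ gfun p w := h2

lemma gfun_contOn {p : ℝ} (hp0 : 0 < p) (b : ℝ) : ContinuousOn (gfun p) (Set.Icc 1 b) := by
  unfold gfun
  have hpos : ∀ x ∈ Set.Icc (1:ℝ) b, x ≠ 0 := fun x hx => by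
    have := hx.1; intro h; rw [h] at this; linarith
  refine ContinuousOn.rpow_const ?_ fun x hx => Or.inr (by positivity)
  apply ContinuousOn.div_const
  exact (continuousOn_id.rpow_const fun x hx => Or.inl (hpos x hx)).add
    (continuousOn_id.rpow_const fun x hx => Or.inl (hpos x hx))

lemma gfun_surj {p : ℝ} (hp0 : 0 < p) {z : ℝ} (hz : 1 ≤ z) :
    ∃ w, 1 ≤ w ∧ gfun p w = z := by
  set b := 2 ^ (1 / p) * z with hb
  have h2p : (1:ℝ) ≤ 2 ^ (1 / p) := by
    calc (1:ℝ) = 2 ^ (0:ℝ) := by norm_num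
    _ ≤ 2 ^ (1 / p) := Real.rpow_le_rpow_of_exponent_le (by norm_num) (by positivity)
  have hzb : z ≤ b := by nlinarith
  have h1b : (1:ℝ) ≤ b := le_trans hz hzb
  have hgb : z ≤ gfun p b := by
    have := gfun_ge hp0 h1b
    have h2p0 : (0:ℝ) < 2 ^ (1 / p) := by positivity
    have heq : b / 2 ^ (1 / p) = z := by rw [hb]; field_simp
    rw [← heq]; exact this
  have := intermediate_value_Icc h1b (gfun_contOn hp0 b)
  have hmem : z ∈ Set.Icc (gfun p 1) (gfun p b) := by
    rw [gfun_one]; exact ⟨hz, hgb⟩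
  obtain ⟨w, hw, hweq⟩ := this hmem
  exact ⟨w, hw.1, hweq⟩

lemma scalar_key {p : ℝ} (hp0 : 0 < p) {w : ℝ} (hw : 1 ≤ w) :
    w ^ (1/2 : ℝ) * ((2:ℝ)⁻¹ • (1 + w ^ (-2 * p))) ^ (1 / p) * w ^ (1/2 : ℝ)
      = gfun p w := by
  have hw0 : 0 < w := lt_of_lt_of_le one_pos hw
  have hhalf : w ^ (1/2 : ℝ) * w ^ (1/2 : ℝ) = w := by
    rw [← Real.rpow_add hw0]; norm_num
  have hcomm : w ^ (1/2 : ℝ) * ((2:ℝ)⁻¹ • (1 + w ^ (-2 * p))) ^ (1 / p) * w ^ (1/2 : ℝ)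
      = w * ((2:ℝ)⁻¹ • (1 + w ^ (-2 * p))) ^ (1 / p) := by
    rw [mul_comm (w ^ (1/2:ℝ)) _, mul_assoc, hhalf, mul_comm]
  rw [hcomm]
  have key : ∀ c : ℝ, 0 ≤ c → w * c ^ (1 / p) = (w ^ p * c) ^ (1 / p) := by
    intro c hc
    rw [Real.mul_rpow (by positivity) hc, ← Real.rpow_mul hw0.le,
      mul_one_div_cancel hp0.ne', Real.rpow_one]
  rw [key _ (by positivity)]
  unfold gfun
  congr 1
  have hws : w ^ p * w ^ (-2 * p) = w ^ (-p) := by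
    rw [← Real.rpow_add hw0]; ring_nf
  rw [smul_eq_mul]
  linear_combination hws / 2

end OMaux

theorem operator_monotone_of_geom_le_power_mean (f : ℝ → ℝ) (p : ℝ)
    (hp0 : 0 < p) (hp1 : p ≤ 1) (hf : ContinuousOn f (Set.Ici 0))
    (h : ∀ (n : ℕ) (A B : Matrix (Fin n) (Fin n) ℂ), A.PosDef → B.PosDef →
      (cfc f (Pmu p A B) - cfc f (geomMean A B)).PosSemidef) :
    ∀ (n : ℕ) (X Y : Matrix (Fin n) (Fin n) ℂ), X.PosDef → Y.PosDef →
      (Y - X).PosSemidef → (cfc f Y - cfc f X).PosSemidef := by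
  classical
  intro n X Y hX hY hXY
  open OMaux in
  -- the scalar inverse function
  have hex : ∀ z : ℝ, ∃ w, 1 ≤ w ∧ (1 ≤ z → OMaux.gfun p w = z) := by
    intro z
    by_cases hz : 1 ≤ z
    · obtain ⟨w, h1, h2⟩ := OMaux.gfun_surj hp0 hz
      exact ⟨w, h1, fun _ => h2⟩
    · exact ⟨1, le_refl 1, fun hz' => absurd hz' hz⟩
  choose hfun hfun1 hfungh using hex
  have hfun0 : ∀ z, 0 < hfun z := fun z => lt_of_lt_of_le one_pos (hfun1 z)
  -- basic matrices
  set T := mpow X (1 / 2) with hTdef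
  set Ti := mpow X (-(1 / 2)) with hTidef
  have hTpd : T.PosDef := OMaux.mpow_posDef hX _
  have hTipd : Ti.PosDef := OMaux.mpow_posDef hX _
  have hTst : star T = T := (OMaux.sa_of_pd hTpd).star_eq
  have hTist : star Ti = Ti := (OMaux.sa_of_pd hTipd).star_eq
  have hTTi : T * Ti = 1 := by
    rw [hTdef, hTidef, OMaux.mpow_mul_mpow hX]
    norm_num [OMaux.mpow_zero hX]
  have hTiT : Ti * T = 1 := by
    rw [hTdef, hTidef, OMaux.mpow_mul_mpow hX]
    norm_num [OMaux.mpow_zero hX]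
  have hTT : T * T = X := by
    rw [hTdef, OMaux.mpow_mul_mpow hX]
    norm_num [OMaux.mpow_one' hX]
  have hTTiR : ∀ K, T * (Ti * K) = K := fun K => by rw [← mul_assoc, hTTi, one_mul]
  have hTiTR : ∀ K, Ti * (T * K) = K := fun K => by rw [← mul_assoc, hTiT, one_mul]
  set Z := Ti * Y * Ti with hZdef
  have hZpd : Z.PosDef := OMaux.posDef_conj_herm hY (OMaux.sa_of_pd hTipd) ⟨T, hTTi⟩
  have hZsa : IsSelfAdjoint Z := OMaux.sa_of_pd hZpd
  have hZ1 : ∀ x ∈ spectrum ℝ Z, 1 ≤ x := by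
    apply OMaux.one_le_spectrum
    have hTiXTi : Ti * X * Ti = 1 := by
      rw [← hTT]
      simp only [mul_assoc]
      rw [hTTi, mul_one, hTiT]
    have hZ1eq : Z - 1 = Ti * (Y - X) * Ti := by
      rw [hZdef, mul_sub, sub_mul, hTiXTi]
    rw [hZ1eq]
    exact OMaux.posSemidef_conj_herm hXY (OMaux.sa_of_pd hTipd)
  -- powers of W
  set W : ℝ → Matrix (Fin n) (Fin n) ℂ := fun r => cfc (fun z => hfun z ^ r) Z with hWdef
  have hWsaj : ∀ r, IsSelfAdjoint (W r) := fun r => OMaux.cfc_sa _ _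
  have hWst : ∀ r, star (W r) = W r := fun r => (hWsaj r).star_eq
  have hWpd : ∀ r, (W r).PosDef := fun r =>
    OMaux.cfc_posDef hZpd fun x _ => Real.rpow_pos_of_pos (hfun0 x) r
  have hWmul : ∀ r s, W r * W s = W (r + s) := fun r s => by
    simp only [hWdef]
    rw [OMaux.cfc_mul']
    exact cfc_congr fun x _ => (Real.rpow_add (hfun0 x) r s).symm
  have hWmulR : ∀ r s K, W r * (W s * K) = W (r + s) * K := fun r s K => by
    rw [← mul_assoc, hWmul]
  have hW0 : W 0 = 1 := by
    simp only [hWdef]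
    calc cfc (fun z : ℝ => hfun z ^ (0:ℝ)) Z = cfc (1 : ℝ → ℝ) Z :=
          cfc_congr fun x _ => Real.rpow_zero _
      _ = 1 := cfc_one ℝ Z hZsa
  have hmpowW : ∀ r s, mpow (W r) s = W (r * s) := fun r s => by
    simp only [hWdef]
    rw [OMaux.mpow_cfc _ hZsa]
    exact cfc_congr fun x _ => (Real.rpow_mul (hfun0 x).le r s).symm
  -- the two matrices fed to the hypothesis
  set A := T * W 1 * T with hAdef
  set B := T * W (-1) * T with hBdef
  have hApd : A.PosDef := OMaux.posDef_conj_herm (hWpd 1) (OMaux.sa_of_pd hTpd) ⟨Ti, hTiT⟩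
  have hBpd : B.PosDef := OMaux.posDef_conj_herm (hWpd (-1)) (OMaux.sa_of_pd hTpd) ⟨Ti, hTiT⟩
  set S := mpow A (1 / 2) with hSdef
  set Si := mpow A (-(1 / 2)) with hSidef
  have hSpd : S.PosDef := OMaux.mpow_posDef hApd _
  have hSipd : Si.PosDef := OMaux.mpow_posDef hApd _
  have hSst : star S = S := (OMaux.sa_of_pd hSpd).star_eq
  have hSist : star Si = Si := (OMaux.sa_of_pd hSipd).star_eq
  have hSSi : S * Si = 1 := by
    rw [hSdef, hSidef, OMaux.mpow_mul_mpow hApd]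
    norm_num [OMaux.mpow_zero hApd]
  have hSiS : Si * S = 1 := by
    rw [hSdef, hSidef, OMaux.mpow_mul_mpow hApd]
    norm_num [OMaux.mpow_zero hApd]
  have hSS : S * S = A := by
    rw [hSdef, OMaux.mpow_mul_mpow hApd]
    norm_num [OMaux.mpow_one' hApd]
  have hSSiR : ∀ K, S * (Si * K) = K := fun K => by rw [← mul_assoc, hSSi, one_mul]
  -- the unitary
  set M := Si * T * W (1 / 2) with hMdef
  have hstarM : star M = W (1 / 2) * T * Si := by
    rw [hMdef]
    simp only [StarMul.star_mul, hWst, hTst, hSist, mul_assoc]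
  have hMM : M * star M = 1 := by
    rw [hstarM, hMdef]
    have e1 : Si * T * W (1 / 2) * (W (1 / 2) * T * Si) = Si * (T * W 1 * T) * Si := by
      rw [show W (1:ℝ) = W (1/2) * W (1/2) by rw [hWmul]; norm_num]
      simp only [mul_assoc]
    rw [e1, ← hAdef, ← hSS]
    simp only [mul_assoc]
    rw [hSSi, mul_one, hSiS]
  have hMsM : star M * M = 1 := mul_eq_one_comm.mp hMM
  -- conjugation formulas
  have hconjpow : ∀ a r : ℝ, mpow (M * W a * star M) r = M * W (a * r) * star M := by
    intro a r
    have hc := OMaux.cfc_conj (fun x : ℝ => x ^ r) M (W a) hMM hMsM (hWsaj a)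
    have h2 := hmpowW a r
    rw [mpow] at h2 ⊢
    rw [hc, h2]
  have hinner : Si * B * Si = M * W (-2) * star M := by
    rw [hstarM, hMdef, hBdef]
    simp only [mul_assoc]
    rw [hWmulR, hWmulR]
    norm_num
  -- geometric mean equals X
  have hgeom : geomMean A B = X := by
    unfold geomMean
    rw [← hSdef, ← hSidef, hinner, hconjpow (-2) (1/2)]
    rw [hstarM, hMdef]
    simp only [mul_assoc]
    rw [hSiS, mul_one, hSSiR]
    rw [hWmulR, hWmulR]
    norm_num [hW0, hTT]
  -- the middle matrix for Pmu
  set E := cfc (fun z => ((2:ℝ)⁻¹ • (1 + hfun z ^ (-2 * p))) ^ (1 / p)) Z with hEdef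
  have hD : (2:ℂ)⁻¹ • (1 + W (-2 * p)) = cfc (fun z => (2:ℝ)⁻¹ • (1 + hfun z ^ (-2 * p))) Z := by
    simp only [hWdef]
    rw [cfc_smul ((2:ℝ)⁻¹) (fun z => 1 + hfun z ^ (-2 * p)) Z (OMaux.contOn _ _)]
    rw [cfc_add Z (fun _ => (1:ℝ)) (fun z => hfun z ^ (-2 * p)) (OMaux.contOn _ _)
      (OMaux.contOn _ _)]
    rw [cfc_const (1:ℝ) Z hZsa, _root_.map_one]
    rw [show ((2:ℂ))⁻¹ = algebraMap ℝ ℂ (2⁻¹:ℝ) by norm_num, algebraMap_smul]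
  have hDsa : IsSelfAdjoint ((2:ℂ)⁻¹ • (1 + W (-2 * p))) := by
    rw [hD]; exact OMaux.cfc_sa _ _
  have hDEinner : cfc (fun x : ℝ => x ^ (1 / p)) ((2:ℂ)⁻¹ • (1 + W (-2 * p))) = E := by
    show mpow ((2:ℂ)⁻¹ • (1 + W (-2 * p))) (1 / p) = E
    rw [hD, OMaux.mpow_cfc _ hZsa, hEdef]
  have hpull : M * ((2:ℂ)⁻¹ • (1 + W (-2 * p))) * star M
      = (2:ℂ)⁻¹ • (1 + M * W (-2 * p) * star M) := by
    rw [mul_smul_comm, smul_mul_assoc, mul_add, mul_one, add_mul, hMM]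
  have hDE : mpow (M * ((2:ℂ)⁻¹ • (1 + W (-2 * p))) * star M) (1 / p) = M * E * star M := by
    have hc := OMaux.cfc_conj (fun x : ℝ => x ^ (1 / p)) M _ hMM hMsM hDsa
    rw [mpow, hc, hDEinner]
  have hmidP : W (1 / 2) * E * W (1 / 2) = Z := by
    simp only [hWdef, hEdef]
    rw [OMaux.cfc_mul', OMaux.cfc_mul']
    have key : Set.EqOn
        (fun z => hfun z ^ ((1:ℝ) / 2) * ((2:ℝ)⁻¹ • (1 + hfun z ^ (-2 * p))) ^ (1 / p)
          * hfun z ^ ((1:ℝ) / 2))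
        (fun z : ℝ => z) (spectrum ℝ Z) := by
      intro z hz
      simp only
      rw [OMaux.scalar_key hp0 (hfun1 z), hfungh z (hZ1 z hz)]
    rw [cfc_congr key, cfc_id' ℝ Z hZsa]
  have hmidP' : W (1 / 2) * (E * (W (1 / 2) * T)) = Z * T := by
    calc W (1 / 2) * (E * (W (1 / 2) * T)) = W (1 / 2) * E * W (1 / 2) * T := by
          simp only [mul_assoc]
      _ = Z * T := by rw [hmidP]
  -- power mean equals Y
  have hPmu : Pmu p A B = Y := by
    unfold Pmu
    rw [← hSdef, ← hSidef, hinner, hconjpow (-2) p, ← hpull, hDE]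
    rw [hstarM, hMdef]
    simp only [mul_assoc]
    rw [hSiS, mul_one, hSSiR, hmidP']
    rw [hZdef]
    simp only [mul_assoc]
    rw [hTiT, mul_one, hTTiR]
  have hmain := h n A B hApd hBpd
  rw [hPmu, hgeom] at hmain
  exact hmain
end

section
/- For every Y with I ≤ Y (Y an n×n positive definite Hermitian matrix, I the identity), there exists a positive definite matrix A₀ such that, with B₀ = A₀^{-1}, one has A₀ # B₀ = I and Y = A₀^(1/2)((I + (A₀^(-1/2) B₀ A₀^(-1/2))^p)/2)^(1/p) A₀^(1/2) = ((A₀^p + A₀^{-p})/2)^(1/p), for any fixed 0 < p ≤ 1. -/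
open scoped ComplexOrder

lemma contOn_of_finite {f : ℝ → ℝ} {s : Set ℝ} (hs : s.Finite) : ContinuousOn f s := by
  rw [continuousOn_iff_continuous_restrict]
  haveI := hs.to_subtype
  haveI : DiscreteTopology s := Finite.instDiscreteTopology
  exact continuous_of_discreteTopology

lemma posDef_of_posSemidef_isUnit {n : ℕ} {A : Matrix (Fin n) (Fin n) ℂ}
    (h : A.PosSemidef) (hu : IsUnit A) : A.PosDef := by
  refine ⟨h.1, fun x hx => lt_of_le_of_ne (h.2 x) fun heq => hx ?_⟩
  have hAx : A.mulVec x = 0 := (h.dotProduct_mulVec_zero_iff x).mp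
    (by simpa [dotProduct, Matrix.mulVec, Finsupp.sum_fintype, Finset.mul_sum, mul_assoc] using heq.symm)
  have hinj := (Matrix.mulVec_injective_iff_isUnit).mpr hu
  have := hinj (by simpa using hAx : A.mulVec x = A.mulVec 0)
  simpa using this

lemma cfc_mpow_cfc {n : ℕ} {Y : Matrix (Fin n) (Fin n) ℂ} (hY : IsSelfAdjoint Y)
    (f : ℝ → ℝ) (q : ℝ) :
    mpow (cfc f Y) q = cfc (fun y => f y ^ q) Y := by
  rw [mpow, ← cfc_comp' (fun x : ℝ => x ^ q) f Y
    (contOn_of_finite ((Matrix.finite_real_spectrum (A := Y)).image f))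
    (contOn_of_finite (Matrix.finite_real_spectrum (A := Y))) hY]

theorem inverse_problem_geom_power_mean {n : ℕ} (p : ℝ) (hp0 : 0 < p) (hp1 : p ≤ 1)
    {Y : Matrix (Fin n) (Fin n) ℂ} (hY : Y.PosDef) (hIY : (Y - 1).PosSemidef) :
    ∃ A₀ : Matrix (Fin n) (Fin n) ℂ, A₀.PosDef ∧
      geomMean A₀ A₀⁻¹ = 1 ∧
      Y = Pmu p A₀ A₀⁻¹ ∧
      Y = mpow ((2 : ℂ)⁻¹ • (mpow A₀ p + mpow A₀ (-p))) (1 / p) := by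
  have hp : p ≠ 0 := hp0.ne'
  have hsa : IsSelfAdjoint Y := hY.1
  have hfin : (spectrum ℝ Y).Finite := Matrix.finite_real_spectrum (A := Y)
  have hco : ∀ f : ℝ → ℝ, ContinuousOn f (spectrum ℝ Y) := fun f => contOn_of_finite hfin
  -- spectrum of Y is contained in [1, ∞)
  have hS1 : ∀ y ∈ spectrum ℝ Y, (1:ℝ) ≤ y := by
    intro y hy
    have e : Y - algebraMap ℝ (Matrix (Fin n) (Fin n) ℂ) 1 = Y - 1 := by rw [map_one]
    have h1 : y - 1 ∈ spectrum ℝ (Y - 1) := by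
      rw [← e, ← spectrum.sub_singleton_eq]
      exact Set.sub_mem_sub hy rfl
    have hH : (Y - 1).IsHermitian := hIY.1
    rw [hH.spectrum_real_eq_range_eigenvalues] at h1
    obtain ⟨i, hi⟩ := h1
    have := hIY.eigenvalues_nonneg i
    rw [hi] at this
    linarith
  -- the inverse function
  set g : ℝ → ℝ := fun y => (y ^ p + Real.sqrt ((y ^ p) ^ 2 - 1)) ^ p⁻¹ with hgdef
  have hreal : ∀ y ∈ spectrum ℝ Y, 0 < g y ∧ g y ^ p + g y ^ (-p) = 2 * y ^ p := by
    intro y hy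
    have hy1 : (1:ℝ) ≤ y := hS1 y hy
    have hyp1 : 1 ≤ y ^ p := Real.one_le_rpow hy1 hp0.le
    have hs2 : Real.sqrt ((y ^ p) ^ 2 - 1) ^ 2 = (y ^ p) ^ 2 - 1 :=
      Real.sq_sqrt (by nlinarith)
    have ht1 : (1:ℝ) ≤ y ^ p + Real.sqrt ((y ^ p) ^ 2 - 1) :=
      le_trans hyp1 (le_add_of_nonneg_right (Real.sqrt_nonneg _))
    have ht0 : (0:ℝ) < y ^ p + Real.sqrt ((y ^ p) ^ 2 - 1) := lt_of_lt_of_le one_pos ht1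
    have hxpos : 0 < g y := Real.rpow_pos_of_pos ht0 _
    have hxp : g y ^ p = y ^ p + Real.sqrt ((y ^ p) ^ 2 - 1) := by
      rw [hgdef]
      simp only
      rw [← Real.rpow_mul ht0.le, inv_mul_cancel₀ hp, Real.rpow_one]
    have hmul : (y ^ p + Real.sqrt ((y ^ p) ^ 2 - 1)) *
        (y ^ p - Real.sqrt ((y ^ p) ^ 2 - 1)) = 1 := by
      linear_combination -hs2
    have hinvt : (y ^ p + Real.sqrt ((y ^ p) ^ 2 - 1))⁻¹ =
        y ^ p - Real.sqrt ((y ^ p) ^ 2 - 1) := inv_eq_of_mul_eq_one_right hmul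
    have hxnegp : g y ^ (-p) = y ^ p - Real.sqrt ((y ^ p) ^ 2 - 1) := by
      rw [Real.rpow_neg hxpos.le, hxp, hinvt]
    refine ⟨hxpos, ?_⟩
    rw [hxp, hxnegp]; ring
  have hmp2 : ∀ (f : ℝ → ℝ) (q : ℝ), mpow (cfc f Y) q = cfc (fun y => f y ^ q) Y :=
    fun f q => cfc_mpow_cfc hsa f q
  have hmul1 : cfc g Y * cfc (fun y => (g y)⁻¹) Y = 1 := by
    rw [← cfc_mul g (fun y => (g y)⁻¹) Y (hco _) (hco _)]
    have h2 : cfc (fun x => g x * (g x)⁻¹) Y = cfc (fun _ : ℝ => 1) Y :=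
      cfc_congr fun y hy => mul_inv_cancel₀ ((hreal y hy).1.ne')
    rw [h2, cfc_const_one ℝ Y hsa]
  have hinv : (cfc g Y)⁻¹ = cfc (fun y => (g y)⁻¹) Y := Matrix.inv_eq_right_inv hmul1
  have hunit : IsUnit (cfc g Y) := (Matrix.isUnit_iff_isUnit_det _).mpr (Matrix.isUnit_det_of_right_inverse hmul1)
  have hMinner : mpow (cfc g Y) (-(1/2)) * (cfc g Y)⁻¹ * mpow (cfc g Y) (-(1/2))
      = cfc (fun y => g y ^ (-2:ℝ)) Y := by
    rw [hmp2, hinv, ← cfc_mul _ _ Y (hco _) (hco _), ← cfc_mul _ _ Y (hco _) (hco _)]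
    refine cfc_congr fun y hy => ?_
    have hx0 := (hreal y hy).1
    rw [← Real.rpow_neg_one (g y), ← Real.rpow_add hx0, ← Real.rpow_add hx0]
    norm_num
  have hadd : ∀ f h : ℝ → ℝ, cfc f Y + cfc h Y = cfc (fun y => f y + h y) Y :=
    fun f h => (cfc_add Y f h (hco _) (hco _)).symm
  have hone : ∀ h : ℝ → ℝ, (1 : Matrix (Fin n) (Fin n) ℂ) + cfc h Y = cfc (fun y => 1 + h y) Y := by
    intro h
    conv_lhs => rw [← cfc_const_one ℝ Y hsa]
    rw [hadd]
  have hsmul : ∀ h : ℝ → ℝ, (2:ℂ)⁻¹ • cfc h Y = cfc (fun y => 2⁻¹ * h y) Y := by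
    intro h
    have h2 : (2:ℂ)⁻¹ • cfc h Y = ((2:ℝ)⁻¹ : ℝ) • cfc h Y := by
      rw [show ((2:ℂ)⁻¹) = (((2:ℝ)⁻¹ : ℝ) : ℂ) by norm_num, Complex.coe_smul]
    rw [h2, ← cfc_const_mul ((2:ℝ)⁻¹) h Y (hco _)]
  refine ⟨cfc g Y, ?_, ?_, ?_, ?_⟩
  · -- PosDef
    refine posDef_of_posSemidef_isUnit ?_ hunit
    have hA₀eq : cfc g Y = (hY.1).cfc g := Matrix.IsHermitian.cfc_eq hY.1 g
    rw [hA₀eq, Matrix.IsHermitian.cfc, Unitary.conjStarAlgAut_apply, Matrix.star_eq_conjTranspose]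
    apply Matrix.PosSemidef.mul_mul_conjTranspose_same
    refine Matrix.posSemidef_diagonal_iff.mpr fun i => ?_
    have := (hreal _ (hY.1.eigenvalues_mem_spectrum_real i)).1.le
    simpa using this
  · -- geomMean
    rw [geomMean, hMinner, hmp2, hmp2, ← cfc_mul _ _ Y (hco _) (hco _),
      ← cfc_mul _ _ Y (hco _) (hco _)]
    have h2 : cfc (fun x => g x ^ ((1:ℝ)/2) * (g x ^ (-2:ℝ)) ^ ((1:ℝ)/2) * g x ^ ((1:ℝ)/2)) Y
        = cfc (fun _ : ℝ => 1) Y := by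
      refine cfc_congr fun y hy => ?_
      have hx0 := (hreal y hy).1
      rw [← Real.rpow_mul hx0.le, ← Real.rpow_add hx0, ← Real.rpow_add hx0]
      norm_num
    rw [h2, cfc_const_one ℝ Y hsa]
  · -- Pmu
    rw [Pmu, hMinner, hmp2, hmp2, hone _, hsmul _, hmp2,
      ← cfc_mul _ _ Y (hco _) (hco _), ← cfc_mul _ _ Y (hco _) (hco _)]
    refine ((cfc_congr ?_).trans (cfc_id' ℝ Y hsa)).symm
    intro y hy
    obtain ⟨hx0, hsum⟩ := hreal y hy
    have hy1 : (1:ℝ) ≤ y := hS1 y hy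
    have hy0 : (0:ℝ) ≤ y := by linarith
    have ha1 : (g y ^ (-2:ℝ)) ^ p = g y ^ (-p) * g y ^ (-p) := by
      rw [← Real.rpow_mul hx0.le, ← Real.rpow_add hx0]
      ring_nf
    have ha2 : g y ^ (-p) * g y ^ p = 1 := by
      rw [← Real.rpow_add hx0, neg_add_cancel, Real.rpow_zero]
    have ha3 : 2⁻¹ * (1 + (g y ^ (-2:ℝ)) ^ p) = g y ^ (-p) * y ^ p := by
      rw [ha1]; linear_combination (g y ^ (-p) / 2) * hsum - (1/2) * ha2
    have ha4 : (g y ^ (-p) * y ^ p) ^ ((1:ℝ)/p) = g y ^ (-1:ℝ) * y := by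
      rw [Real.mul_rpow (Real.rpow_nonneg hx0.le _) (Real.rpow_nonneg hy0 _),
        ← Real.rpow_mul hx0.le, ← Real.rpow_mul hy0,
        show -p * (1/p) = -1 by field_simp, show p * (1/p) = 1 by field_simp, Real.rpow_one]
    have ha5 : g y ^ ((1:ℝ)/2) * g y ^ (-1:ℝ) * g y ^ ((1:ℝ)/2) = 1 := by
      rw [← Real.rpow_add hx0, ← Real.rpow_add hx0]
      norm_num
    show g y ^ ((1:ℝ)/2) * (2⁻¹ * (1 + (g y ^ (-2:ℝ)) ^ p)) ^ ((1:ℝ)/p) * g y ^ ((1:ℝ)/2) = y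
    rw [ha3, ha4]
    linear_combination y * ha5
  · -- power mean representation
    rw [hmp2, hmp2, hadd, hsmul _, hmp2]
    refine ((cfc_congr ?_).trans (cfc_id' ℝ Y hsa)).symm
    intro y hy
    obtain ⟨hx0, hsum⟩ := hreal y hy
    have hy1 : (1:ℝ) ≤ y := hS1 y hy
    have hy0 : (0:ℝ) ≤ y := by linarith
    show (2⁻¹ * (g y ^ p + g y ^ (-p))) ^ ((1:ℝ)/p) = y
    have h1 : 2⁻¹ * (g y ^ p + g y ^ (-p)) = y ^ p := by linear_combination hsum / 2
    rw [h1, ← Real.rpow_mul hy0, show p * (1/p) = 1 by field_simp, Real.rpow_one]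
end
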